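/- arXiv:math/0601757 — 6 statements merged into one kernel-verified Lean document; each statement's English description precedes it below -/
import Mathlib

section
/- Let f be a monotone convex function on an interval I containing 0 with f(0) ≤ 0, let A be an n×n Hermitian matrix with spectrum in I, and let X be an n×n contraction (operator norm ≤ 1). Then there exists a unitary matrix U such that f(X A X*) ≤ U* X f(A) X* U in the Loewner order. -/
open Matrix
open scoped ComplexOrder Kronecker

/-- Functional calculus for Hermitian matrices: apply `f : ℝ → ℝ` to the eigenvalues in a
spectral decomposition (junk value `0` if the matrix is not Hermitian). -/
noncomputable def hermCFC {ι : Type*} [Fintype ι] [DecidableEq ι]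
    (M : Matrix ι ι ℂ) (f : ℝ → ℝ) : Matrix ι ι ℂ :=
  if h : M.IsHermitian then h.cfc f else 0

/-- Eigenvalues of a Hermitian matrix listed in decreasing order:
`eigDesc M j` is the `(j+1)`-th largest eigenvalue (junk value `0` if not Hermitian). -/
noncomputable def eigDesc {n : ℕ} (M : Matrix (Fin n) (Fin n) ℂ) : Fin n → ℝ :=
  if h : M.IsHermitian then fun j => h.eigenvalues (Tuple.sort h.eigenvalues j.rev) else 0

/-- Eigenvalues of a Hermitian matrix listed in increasing order:
`eigAsc M j` is the `(j+1)`-th smallest eigenvalue (junk value `0` if not Hermitian). -/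
noncomputable def eigAsc {n : ℕ} (M : Matrix (Fin n) (Fin n) ℂ) : Fin n → ℝ :=
  if h : M.IsHermitian then fun j => h.eigenvalues (Tuple.sort h.eigenvalues j) else 0

/-- The absolute value `|X| = (XᴴX)^(1/2)` of a matrix. -/
noncomputable def matAbs {n : ℕ} (X : Matrix (Fin n) (Fin n) ℂ) : Matrix (Fin n) (Fin n) ℂ :=
  (Matrix.posSemidef_conjTranspose_mul_self X).1.eigenvectorUnitary.1 *
    diagonal ((↑) ∘ (√·) ∘ (Matrix.posSemidef_conjTranspose_mul_self X).1.eigenvalues) *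
    (star (Matrix.posSemidef_conjTranspose_mul_self X).1.eigenvectorUnitary : Matrix (Fin n) (Fin n) ℂ)

/-- The Loewner order: `X ≤ Y` iff `Y - X` is positive semidefinite. -/
def loewnerLE {n : ℕ} (X Y : Matrix (Fin n) (Fin n) ℂ) : Prop := (Y - X).PosSemidef



open Matrix
open scoped ComplexOrder

variable {n : ℕ}

local notation "⟪" x ", " y "⟫" => @inner ℂ _ _ x y

namespace Aux

noncomputable abbrev eb {M : Matrix (Fin n) (Fin n) ℂ} (hM : M.IsHermitian) :=
  hM.eigenvectorBasis

lemma cfc_id {M : Matrix (Fin n) (Fin n) ℂ} (hM : M.IsHermitian) :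
    hM.cfc id = M := by
  rw [Matrix.IsHermitian.cfc]
  exact hM.spectral_theorem.symm

lemma single_eq_smul (j : Fin n) (c : ℂ) :
    (Pi.single j c : Fin n → ℂ) = c • (Pi.single j 1 : Fin n → ℂ) := by
  funext k
  by_cases hk : k = j <;> simp [Pi.single_apply, hk]

lemma cfc_mulVec {M : Matrix (Fin n) (Fin n) ℂ} (hM : M.IsHermitian) (g : ℝ → ℝ) (j : Fin n) :
    (hM.cfc g) *ᵥ ⇑(eb hM j) = (g (hM.eigenvalues j) : ℂ) • ⇑(eb hM j) := by
  rw [Matrix.IsHermitian.cfc, Unitary.conjStarAlgAut_apply, ← Matrix.mulVec_mulVec, ← Matrix.mulVec_mulVec,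
    Matrix.IsHermitian.star_eigenvectorUnitary_mulVec, Matrix.diagonal_mulVec_single,
    single_eq_smul, Matrix.mulVec_smul, Matrix.IsHermitian.eigenvectorUnitary_mulVec]
  simp

lemma cfc_apply_eb {M : Matrix (Fin n) (Fin n) ℂ} (hM : M.IsHermitian) (g : ℝ → ℝ) (j : Fin n) :
    Matrix.toEuclideanLin (hM.cfc g) (eb hM j) = (g (hM.eigenvalues j) : ℂ) • eb hM j := by
  apply (WithLp.equiv 2 _).injective
  simpa [Matrix.toEuclideanLin_apply] using cfc_mulVec hM g j

lemma quad {M : Matrix (Fin n) (Fin n) ℂ} (hM : M.IsHermitian) (g : ℝ → ℝ)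
    (x : EuclideanSpace ℂ (Fin n)) :
    ⟪x, Matrix.toEuclideanLin (hM.cfc g) x⟫
      = ∑ i, (g (hM.eigenvalues i) : ℂ) * ((‖(eb hM).repr x i‖ : ℝ) ^ 2 : ℝ) := by
  have hTx : Matrix.toEuclideanLin (hM.cfc g) x
      = ∑ i, ((g (hM.eigenvalues i) : ℂ) * (eb hM).repr x i) • eb hM i := by
    conv_lhs => rw [← (eb hM).sum_repr x]
    rw [map_sum]
    congr 1; funext i
    rw [_root_.map_smul, cfc_apply_eb, smul_smul, mul_comm]
  rw [hTx, inner_sum]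
  congr 1; funext i
  rw [inner_smul_right, ← inner_conj_symm x (eb hM i), (eb hM).repr_apply_apply, mul_assoc,
    Complex.mul_conj]
  norm_cast
  simp [Complex.normSq_eq_norm_sq]

end Aux

namespace Aux
open Module Submodule

/-- real quadratic form value -/
noncomputable def quadR {M : Matrix (Fin n) (Fin n) ℂ} (hM : M.IsHermitian) (g : ℝ → ℝ)
    (x : EuclideanSpace ℂ (Fin n)) : ℝ :=
  ∑ i, g (hM.eigenvalues i) * ‖(eb hM).repr x i‖ ^ 2

lemma quad' {M : Matrix (Fin n) (Fin n) ℂ} (hM : M.IsHermitian) (g : ℝ → ℝ)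
    (x : EuclideanSpace ℂ (Fin n)) :
    ⟪x, Matrix.toEuclideanLin (hM.cfc g) x⟫ = (quadR hM g x : ℂ) := by
  rw [quad hM g x, quadR]
  push_cast
  rfl

lemma parseval {M : Matrix (Fin n) (Fin n) ℂ} (hM : M.IsHermitian)
    (x : EuclideanSpace ℂ (Fin n)) :
    ∑ i, ‖(eb hM).repr x i‖ ^ 2 = ‖x‖ ^ 2 := by
  rw [← (eb hM).repr.norm_map x, EuclideanSpace.norm_eq]
  rw [Real.sq_sqrt (by positivity)]

lemma repr_eq_zero_of_mem_span {M : Matrix (Fin n) (Fin n) ℂ} (hM : M.IsHermitian)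
    {S : Finset (Fin n)} {x : EuclideanSpace ℂ (Fin n)}
    (hx : x ∈ span ℂ (eb hM '' (S : Set (Fin n)))) {i : Fin n} (hi : i ∉ S) :
    (eb hM).repr x i = 0 := by
  have h1 : x ∈ span ℂ (⇑(eb hM).toBasis '' (S : Set (Fin n))) := by
    rwa [(eb hM).coe_toBasis]
  rw [Basis.mem_span_image] at h1
  rw [← (eb hM).coe_toBasis_repr_apply]
  by_contra h
  exact hi (h1 (Finsupp.mem_support_iff.mpr h))

lemma finrank_span_eb {M : Matrix (Fin n) (Fin n) ℂ} (hM : M.IsHermitian)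
    (S : Finset (Fin n)) :
    finrank ℂ (span ℂ (eb hM '' (S : Set (Fin n)))) = S.card := by
  have hli : LinearIndependent ℂ (fun i : (S : Set (Fin n)) => eb hM i) :=
    ((eb hM).orthonormal.linearIndependent).comp _ Subtype.coe_injective
  have : eb hM '' (S : Set (Fin n)) = Set.range (fun i : (S : Set (Fin n)) => eb hM i) := by
    rw [Set.image_eq_range]
  rw [this, finrank_span_eq_card hli]
  simp

lemma exists_unit_mem_inf (V W : Submodule ℂ (EuclideanSpace ℂ (Fin n)))
    (h : n < finrank ℂ V + finrank ℂ W) :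
    ∃ x : EuclideanSpace ℂ (Fin n), ‖x‖ = 1 ∧ x ∈ V ∧ x ∈ W := by
  have hsup : finrank ℂ ↥(V ⊔ W) ≤ n := by
    simpa [finrank_euclideanSpace] using (V ⊔ W).finrank_le
  have hinf : finrank ℂ ↥(V ⊓ W) ≠ 0 := by
    have := Submodule.finrank_sup_add_finrank_inf_eq V W
    omega
  have hbot : V ⊓ W ≠ ⊥ := by
    intro hb
    rw [hb] at hinf
    simp at hinf
  obtain ⟨x, hxm, hx0⟩ := Submodule.exists_mem_ne_zero_of_ne_bot hbot
  refine ⟨(‖x‖ : ℂ)⁻¹ • x, ?_, ?_, ?_⟩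
  · rw [norm_smul]
    simp [norm_inv, norm_ne_zero_iff.mpr hx0]
  · exact Submodule.smul_mem _ _ hxm.1
  · exact Submodule.smul_mem _ _ hxm.2

end Aux

namespace Aux

lemma toEuclideanLin_mul_apply (M N : Matrix (Fin n) (Fin n) ℂ) (x : EuclideanSpace ℂ (Fin n)) :
    Matrix.toEuclideanLin (M * N) x
      = Matrix.toEuclideanLin M (Matrix.toEuclideanLin N x) := by
  simp only [Matrix.toEuclideanLin_apply, Equiv.apply_symm_apply, Matrix.mulVec_mulVec]

lemma inner_toEuclideanLin_eq_dot (M : Matrix (Fin n) (Fin n) ℂ)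
    (x y : EuclideanSpace ℂ (Fin n)) :
    ⟪x, Matrix.toEuclideanLin M y⟫
      = dotProduct (star (WithLp.equiv 2 _ x)) (M *ᵥ (WithLp.equiv 2 _ y)) := by
  rw [EuclideanSpace.inner_eq_star_dotProduct, dotProduct_comm]; rfl

lemma norm_sq_eq_re_inner (x : EuclideanSpace ℂ (Fin n)) :
    (‖x‖ : ℝ) ^ 2 = (⟪x, x⟫).re := by
  rw [← inner_self_eq_norm_sq (𝕜 := ℂ) x]; rfl

lemma contract_mulVec {X : Matrix (Fin n) (Fin n) ℂ} (hX : (1 - Xᴴ * X).PosSemidef)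
    (y : EuclideanSpace ℂ (Fin n)) :
    ‖Matrix.toEuclideanLin X y‖ ≤ ‖y‖ := by
  have h1 : (0 : ℂ) ≤ dotProduct (star (WithLp.equiv 2 _ y))
      ((1 - Xᴴ * X) *ᵥ (WithLp.equiv 2 _ y)) := hX.dotProduct_mulVec_nonneg _
  have h2 : ⟪Matrix.toEuclideanLin X y, Matrix.toEuclideanLin X y⟫
      = dotProduct (star (WithLp.equiv 2 _ y)) ((Xᴴ * X) *ᵥ (WithLp.equiv 2 _ y)) := by
    rw [inner_toEuclideanLin_eq_dot]
    simp only [Matrix.toEuclideanLin_apply, Equiv.apply_symm_apply, WithLp.equiv_apply,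
      WithLp.ofLp_toLp]
    simp only [Matrix.star_mulVec, ← Matrix.mulVec_mulVec, dotProduct_mulVec]
  have h3 : ⟪y, y⟫ = dotProduct (star (WithLp.equiv 2 _ y)) ((WithLp.equiv 2 _ y)) := by
    rw [EuclideanSpace.inner_eq_star_dotProduct, dotProduct_comm]; rfl
  have hsq : (‖Matrix.toEuclideanLin X y‖ : ℝ) ^ 2 ≤ ‖y‖ ^ 2 := by
    rw [norm_sq_eq_re_inner, norm_sq_eq_re_inner, h2, h3]
    have := (Complex.le_def.mp h1).1
    rw [Matrix.sub_mulVec, dotProduct_sub, Matrix.one_mulVec] at this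
    simp only [Complex.sub_re, Complex.zero_re] at this
    linarith
  calc ‖Matrix.toEuclideanLin X y‖ = √(‖Matrix.toEuclideanLin X y‖ ^ 2) := by
        rw [Real.sqrt_sq (norm_nonneg _)]
    _ ≤ √(‖y‖ ^ 2) := Real.sqrt_le_sqrt hsq
    _ = ‖y‖ := Real.sqrt_sq (norm_nonneg _)

lemma contract_conjTranspose {X : Matrix (Fin n) (Fin n) ℂ} (hX : (1 - Xᴴ * X).PosSemidef)
    (x : EuclideanSpace ℂ (Fin n)) :
    ‖Matrix.toEuclideanLin Xᴴ x‖ ≤ ‖x‖ := by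
  set z := Matrix.toEuclideanLin Xᴴ x with hz
  have h1 : (‖z‖ : ℝ) ^ 2 = (⟪x, Matrix.toEuclideanLin X z⟫).re := by
    rw [norm_sq_eq_re_inner, hz, Matrix.toEuclideanLin_conjTranspose_eq_adjoint,
      LinearMap.adjoint_inner_left]
  have h2 : (⟪x, Matrix.toEuclideanLin X z⟫).re ≤ ‖x‖ * ‖z‖ := by
    calc (⟪x, Matrix.toEuclideanLin X z⟫).re ≤ ‖⟪x, Matrix.toEuclideanLin X z⟫‖ :=
          Complex.re_le_norm _
      _ ≤ ‖x‖ * ‖Matrix.toEuclideanLin X z‖ := norm_inner_le_norm _ _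
      _ ≤ ‖x‖ * ‖z‖ := by
          have := contract_mulVec hX z
          exact mul_le_mul_of_nonneg_left this (norm_nonneg _)
  by_cases hz0 : ‖z‖ = 0
  · rw [hz0]; exact norm_nonneg _
  · have hzpos : 0 < ‖z‖ := lt_of_le_of_ne (norm_nonneg _) (Ne.symm hz0)
    have : ‖z‖ * ‖z‖ ≤ ‖x‖ * ‖z‖ := by
      rw [← sq]; exact h1 ▸ (h1 ▸ h2)
    exact le_of_mul_le_mul_right this hzpos

lemma conj_quad_eq (N : Matrix (Fin n) (Fin n) ℂ) (X : Matrix (Fin n) (Fin n) ℂ)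
    (x : EuclideanSpace ℂ (Fin n)) :
    ⟪x, Matrix.toEuclideanLin (X * N * Xᴴ) x⟫
      = ⟪Matrix.toEuclideanLin Xᴴ x, Matrix.toEuclideanLin N (Matrix.toEuclideanLin Xᴴ x)⟫ := by
  rw [toEuclideanLin_mul_apply, toEuclideanLin_mul_apply,
    Matrix.toEuclideanLin_conjTranspose_eq_adjoint, ← LinearMap.adjoint_inner_left]

end Aux

namespace Aux

lemma jensen {A : Matrix (Fin n) (Fin n) ℂ} (hA : A.IsHermitian)
    {I : Set ℝ} (hI : Convex ℝ I) (h0I : (0 : ℝ) ∈ I)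
    {f : ℝ → ℝ} (hconv : ConvexOn ℝ I f) (hf0 : f 0 ≤ 0)
    (hspec : ∀ i, hA.eigenvalues i ∈ I)
    (y : EuclideanSpace ℂ (Fin n)) (hy : ‖y‖ ≤ 1) :
    quadR hA id y ∈ I ∧ f (quadR hA id y) ≤ quadR hA f y := by
  classical
  set w : Fin n → ℝ := fun i => ‖(eb hA).repr y i‖ ^ 2 with hw
  have hw0 : ∀ i, 0 ≤ w i := fun i => by positivity
  have hwsum : ∑ i, w i ≤ 1 := by
    rw [hw]
    have := parseval hA y
    calc ∑ i, ‖(eb hA).repr y i‖ ^ 2 = ‖y‖ ^ 2 := this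
      _ ≤ 1 := by nlinarith [norm_nonneg y]
  set W : Option (Fin n) → ℝ := fun o => o.elim (1 - ∑ i, w i) w with hW
  set p : Option (Fin n) → ℝ := fun o => o.elim 0 hA.eigenvalues with hp
  have hW0 : ∀ o, 0 ≤ W o := by
    rintro (_ | i)
    · simpa [hW] using hwsum
    · exact hw0 i
  have hWsum : ∑ o : Option (Fin n), W o = 1 := by
    rw [Fintype.sum_option]
    simp [hW]
  have hpmem : ∀ o, p o ∈ I := by
    rintro (_ | i)
    · exact h0I
    · exact hspec i
  have hcomb : ∑ o : Option (Fin n), W o • p o = quadR hA id y := by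
    rw [Fintype.sum_option]
    simp only [hW, hp, Option.elim, smul_eq_mul, mul_zero, zero_add, quadR, id_eq]
    exact Finset.sum_congr rfl fun i _ => mul_comm _ _
  have hmem : quadR hA id y ∈ I := by
    rw [← hcomb]
    exact hI.sum_mem (fun o _ => hW0 o) hWsum (fun o _ => hpmem o)
  refine ⟨hmem, ?_⟩
  have hjen : f (∑ o : Option (Fin n), W o • p o)
      ≤ ∑ o : Option (Fin n), W o • f (p o) :=
    hconv.map_sum_le (fun o _ => hW0 o) hWsum (fun o _ => hpmem o)
  rw [hcomb] at hjen
  refine hjen.trans ?_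
  rw [Fintype.sum_option]
  have h1 : W none • f (p none) ≤ 0 := by
    simp only [hW, hp, Option.elim, smul_eq_mul]
    exact mul_nonpos_of_nonneg_of_nonpos (by simpa using hwsum) hf0
  have h2 : ∑ i, W (some i) • f (p (some i)) = quadR hA f y := by
    simp only [hW, hp, Option.elim, smul_eq_mul, quadR]
    exact Finset.sum_congr rfl fun i _ => mul_comm _ _
  rw [h2]
  linarith

end Aux

namespace Aux
open Submodule Module

lemma quadR_sum_subset {M : Matrix (Fin n) (Fin n) ℂ} (hM : M.IsHermitian) (g : ℝ → ℝ)
    {S : Finset (Fin n)} {x : EuclideanSpace ℂ (Fin n)}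
    (hx : x ∈ span ℂ (eb hM '' (S : Set (Fin n)))) :
    quadR hM g x = ∑ i ∈ S, g (hM.eigenvalues i) * ‖(eb hM).repr x i‖ ^ 2 := by
  rw [quadR]
  refine (Finset.sum_subset S.subset_univ ?_).symm
  intro i _ hi
  rw [repr_eq_zero_of_mem_span hM hx hi]
  simp

lemma sum_w_subset {M : Matrix (Fin n) (Fin n) ℂ} (hM : M.IsHermitian)
    {S : Finset (Fin n)} {x : EuclideanSpace ℂ (Fin n)}
    (hx : x ∈ span ℂ (eb hM '' (S : Set (Fin n)))) (hxn : ‖x‖ = 1) :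
    ∑ i ∈ S, ‖(eb hM).repr x i‖ ^ 2 = 1 := by
  have h1 : ∑ i ∈ S, ‖(eb hM).repr x i‖ ^ 2 = ∑ i, ‖(eb hM).repr x i‖ ^ 2 := by
    refine Finset.sum_subset S.subset_univ ?_
    intro i _ hi
    rw [repr_eq_zero_of_mem_span hM hx hi]
    simp
  rw [h1, parseval, hxn, one_pow]

lemma span_quad_le {M : Matrix (Fin n) (Fin n) ℂ} (hM : M.IsHermitian) (g : ℝ → ℝ)
    {S : Finset (Fin n)} {x : EuclideanSpace ℂ (Fin n)}
    (hx : x ∈ span ℂ (eb hM '' (S : Set (Fin n)))) (hxn : ‖x‖ = 1)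
    {c : ℝ} (hc : ∀ i ∈ S, g (hM.eigenvalues i) ≤ c) :
    quadR hM g x ≤ c := by
  rw [quadR_sum_subset hM g hx]
  calc ∑ i ∈ S, g (hM.eigenvalues i) * ‖(eb hM).repr x i‖ ^ 2
      ≤ ∑ i ∈ S, c * ‖(eb hM).repr x i‖ ^ 2 := by
        refine Finset.sum_le_sum fun i hi => ?_
        have : (0:ℝ) ≤ ‖(eb hM).repr x i‖ ^ 2 := by positivity
        exact mul_le_mul_of_nonneg_right (hc i hi) this
    _ = c := by rw [← Finset.mul_sum, sum_w_subset hM hx hxn, mul_one]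

lemma le_span_quad {M : Matrix (Fin n) (Fin n) ℂ} (hM : M.IsHermitian) (g : ℝ → ℝ)
    {S : Finset (Fin n)} {x : EuclideanSpace ℂ (Fin n)}
    (hx : x ∈ span ℂ (eb hM '' (S : Set (Fin n)))) (hxn : ‖x‖ = 1)
    {c : ℝ} (hc : ∀ i ∈ S, c ≤ g (hM.eigenvalues i)) :
    c ≤ quadR hM g x := by
  have := span_quad_le hM (fun t => - g t) hx hxn (c := -c) (fun i hi => by
    simpa using hc i hi)
  have h2 : quadR hM (fun t => - g t) x = - quadR hM g x := by
    rw [quadR, quadR, ← Finset.sum_neg_distrib]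
    exact Finset.sum_congr rfl fun i _ => by ring
  rw [h2] at this
  linarith

end Aux

namespace Aux
open Submodule Module

lemma cfc_isHermitian {M : Matrix (Fin n) (Fin n) ℂ} (hM : M.IsHermitian) (g : ℝ → ℝ) :
    (hM.cfc g).IsHermitian := by
  rw [Matrix.IsHermitian.cfc, Unitary.conjStarAlgAut_apply, Matrix.star_eq_conjTranspose]
  exact Matrix.isHermitian_mul_mul_conjTranspose _
    (Matrix.isHermitian_diagonal_of_self_adjoint _ (by
      ext i
      simp [Pi.star_apply, Complex.conj_ofReal]))

lemma quadR_eb {M : Matrix (Fin n) (Fin n) ℂ} (hM : M.IsHermitian) (g : ℝ → ℝ) (j : Fin n) :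
    quadR hM g (eb hM j) = g (hM.eigenvalues j) := by
  rw [quadR]
  rw [Finset.sum_eq_single j]
  · rw [(eb hM).repr_self]
    simp [EuclideanSpace.single_apply]
  · intro i _ hij
    rw [(eb hM).repr_self]
    simp only [EuclideanSpace.single_apply]
    rw [if_neg hij]
    simp
  · simp

section Main

variable {I : Set ℝ} (hI : Convex ℝ I) (h0I : (0 : ℝ) ∈ I)
    {f : ℝ → ℝ} (hconv : ConvexOn ℝ I f) (hf0 : f 0 ≤ 0)
    {A X : Matrix (Fin n) (Fin n) ℂ} (hA : A.IsHermitian)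
    (hspec : ∀ i, hA.eigenvalues i ∈ I) (hX : (1 - Xᴴ * X).PosSemidef)

lemma quad_id {M : Matrix (Fin n) (Fin n) ℂ} (hM : M.IsHermitian)
    (x : EuclideanSpace ℂ (Fin n)) :
    ⟪x, Matrix.toEuclideanLin M x⟫ = (quadR hM id x : ℂ) := by
  conv_lhs => rw [← cfc_id hM]
  exact quad' hM id x

include hI h0I hconv hf0 hspec hX in
lemma main_quad (hB : (X * A * Xᴴ).IsHermitian) (hC : (X * hA.cfc f * Xᴴ).IsHermitian)
    (x : EuclideanSpace ℂ (Fin n)) (hxn : ‖x‖ = 1) :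
    quadR hB id x ∈ I ∧ f (quadR hB id x) ≤ quadR hC id x := by
  set y := Matrix.toEuclideanLin Xᴴ x with hy
  have hyn : ‖y‖ ≤ 1 := le_of_le_of_eq (contract_conjTranspose hX x) hxn
  have hBq : quadR hB id x = quadR hA id y := by
    have : (quadR hB id x : ℂ) = (quadR hA id y : ℂ) := by
      rw [← quad_id hB x, ← quad_id hA y, conj_quad_eq]
    exact_mod_cast this
  have hCq : quadR hC id x = quadR hA f y := by
    have : (quadR hC id x : ℂ) = (quadR hA f y : ℂ) := by
      rw [← quad_id hC x, ← quad' hA f y, conj_quad_eq]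
    exact_mod_cast this
  rw [hBq, hCq]
  exact jensen hA hI h0I hconv hf0 hspec y hyn

include hI h0I hconv hf0 hspec hX in
lemma eigB_mem (hB : (X * A * Xᴴ).IsHermitian) (hC : (X * hA.cfc f * Xᴴ).IsHermitian)
    (i : Fin n) : hB.eigenvalues i ∈ I := by
  have h := (main_quad hI h0I hconv hf0 hA hspec hX hB hC (eb hB i)
    ((eb hB).orthonormal.1 i)).1
  rwa [quadR_eb hB id i] at h

end Main
end Aux

namespace Aux
open Submodule Module

variable {I : Set ℝ} {f : ℝ → ℝ} {A X : Matrix (Fin n) (Fin n) ℂ}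

lemma eig_compare (hI : Convex ℝ I) (h0I : (0 : ℝ) ∈ I)
    (hmono : MonotoneOn f I ∨ AntitoneOn f I) (hconv : ConvexOn ℝ I f) (hf0 : f 0 ≤ 0)
    (hA : A.IsHermitian) (hspec : ∀ i, hA.eigenvalues i ∈ I)
    (hX : (1 - Xᴴ * X).PosSemidef)
    (hB : (X * A * Xᴴ).IsHermitian) (hC : (X * hA.cfc f * Xᴴ).IsHermitian)
    (j : Fin n) :
    f (hB.eigenvalues (Tuple.sort (fun i => f (hB.eigenvalues i)) j))
      ≤ hC.eigenvalues (Tuple.sort hC.eigenvalues j) := by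
  classical
  set ν : Fin n → ℝ := fun i => f (hB.eigenvalues i) with hν
  set μ : Fin n → ℝ := hC.eigenvalues with hμ
  set σ := Tuple.sort ν with hσ
  set τ := Tuple.sort μ with hτ
  set S : Finset (Fin n) := Finset.univ.filter (fun i => ν (σ j) ≤ ν i) with hS
  set T : Finset (Fin n) := Finset.univ.filter (fun i => μ i ≤ μ (τ j)) with hT
  have hScard : n - (j : ℕ) ≤ S.card := by
    have hsub : (Finset.Ici j).image σ ⊆ S := by
      intro i hi
      obtain ⟨k, hk, rfl⟩ := Finset.mem_image.mp hi
      rw [hS, Finset.mem_filter]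
      exact ⟨Finset.mem_univ _, Tuple.monotone_sort ν (Finset.mem_Ici.mp hk)⟩
    calc n - (j : ℕ) = (Finset.Ici j).card := (Fin.card_Ici j).symm
      _ = ((Finset.Ici j).image σ).card :=
          (Finset.card_image_of_injective _ σ.injective).symm
      _ ≤ S.card := Finset.card_le_card hsub
  have hTcard : (j : ℕ) + 1 ≤ T.card := by
    have hsub : (Finset.Iic j).image τ ⊆ T := by
      intro i hi
      obtain ⟨k, hk, rfl⟩ := Finset.mem_image.mp hi
      rw [hT, Finset.mem_filter]
      exact ⟨Finset.mem_univ _, Tuple.monotone_sort μ (Finset.mem_Iic.mp hk)⟩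
    calc (j : ℕ) + 1 = (Finset.Iic j).card := (Fin.card_Iic j).symm
      _ = ((Finset.Iic j).image τ).card :=
          (Finset.card_image_of_injective _ τ.injective).symm
      _ ≤ T.card := Finset.card_le_card hsub
  have hdim : n < finrank ℂ (span ℂ (eb hB '' (S : Set (Fin n))))
      + finrank ℂ (span ℂ (eb hC '' (T : Set (Fin n)))) := by
    rw [finrank_span_eb hB S, finrank_span_eb hC T]
    have := j.isLt
    omega
  obtain ⟨x, hxn, hxV, hxW⟩ := exists_unit_mem_inf _ _ hdim
  have hmain := main_quad hI h0I hconv hf0 hA hspec hX hB hC x hxn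
  have hupper : quadR hC id x ≤ μ (τ j) := by
    refine span_quad_le hC id hxW hxn fun i hi => ?_
    rw [hT, Finset.mem_filter] at hi
    exact hi.2
  have hlower : ν (σ j) ≤ f (quadR hB id x) := by
    have hSne : S.Nonempty := ⟨σ j, by rw [hS, Finset.mem_filter]; exact ⟨Finset.mem_univ _, le_refl _⟩⟩
    rcases hmono with hm | hm
    · obtain ⟨i₀, hi₀S, hmin⟩ := S.exists_min_image hB.eigenvalues hSne
      have h1 : hB.eigenvalues i₀ ≤ quadR hB id x :=
        le_span_quad hB id hxV hxn fun i hi => hmin i hi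
      have h2 : f (hB.eigenvalues i₀) ≤ f (quadR hB id x) :=
        hm (eigB_mem hI h0I hconv hf0 hA hspec hX hB hC i₀) hmain.1 h1
      have h3 : ν (σ j) ≤ ν i₀ := by
        rw [hS, Finset.mem_filter] at hi₀S
        exact hi₀S.2
      exact h3.trans h2
    · obtain ⟨i₁, hi₁S, hmax⟩ := S.exists_max_image hB.eigenvalues hSne
      have h1 : quadR hB id x ≤ hB.eigenvalues i₁ :=
        span_quad_le hB id hxV hxn fun i hi => hmax i hi
      have h2 : f (hB.eigenvalues i₁) ≤ f (quadR hB id x) :=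
        hm hmain.1 (eigB_mem hI h0I hconv hf0 hA hspec hX hB hC i₁) h1
      have h3 : ν (σ j) ≤ ν i₁ := by
        rw [hS, Finset.mem_filter] at hi₁S
        exact hi₁S.2
      exact h3.trans h2
  exact hlower.trans (hmain.2.trans hupper)

end Aux

namespace Aux

lemma reindex_decomp (W : Matrix (Fin n) (Fin n) ℂ) (ρ : Equiv.Perm (Fin n)) (c : Fin n → ℂ) :
    W.submatrix id ⇑ρ * Matrix.diagonal (c ∘ ρ) * (W.submatrix id ⇑ρ)ᴴ
      = W * Matrix.diagonal c * Wᴴ := by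
  rw [Matrix.conjTranspose_submatrix, ← Matrix.submatrix_diagonal_equiv,
    Matrix.submatrix_mul_equiv, Matrix.submatrix_mul_equiv]
  rfl

lemma submatrix_mem_unitary {W : Matrix (Fin n) (Fin n) ℂ}
    (hW : W ∈ Matrix.unitaryGroup (Fin n) ℂ) (ρ : Equiv.Perm (Fin n)) :
    W.submatrix id ⇑ρ ∈ Matrix.unitaryGroup (Fin n) ℂ := by
  rw [Matrix.mem_unitaryGroup_iff']
  rw [Matrix.star_eq_conjTranspose, Matrix.conjTranspose_submatrix]
  show Wᴴ.submatrix ⇑ρ ⇑(Equiv.refl (Fin n)) * W.submatrix ⇑(Equiv.refl (Fin n)) ⇑ρ = 1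
  rw [Matrix.submatrix_mul_equiv]
  have h1 : Wᴴ * W = 1 := Matrix.mem_unitaryGroup_iff'.mp hW
  rw [h1]
  exact Matrix.submatrix_one_equiv ρ

lemma stepC {V W : Matrix (Fin n) (Fin n) ℂ}
    (hV : V ∈ Matrix.unitaryGroup (Fin n) ℂ) (hW : W ∈ Matrix.unitaryGroup (Fin n) ℂ)
    (d e : Fin n → ℝ)
    (h : ∀ j, d (Tuple.sort d j) ≤ e (Tuple.sort e j)) :
    ∃ U ∈ Matrix.unitaryGroup (Fin n) ℂ,
      (Uᴴ * (W * Matrix.diagonal (Complex.ofReal ∘ e) * Wᴴ) * U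
        - V * Matrix.diagonal (Complex.ofReal ∘ d) * Vᴴ).PosSemidef := by
  classical
  set ρ : Equiv.Perm (Fin n) := (Tuple.sort e) * (Tuple.sort d)⁻¹ with hρ
  have hde : ∀ i, d i ≤ e (ρ i) := by
    intro i
    have := h ((Tuple.sort d)⁻¹ i)
    simpa [hρ] using this
  set W' : Matrix (Fin n) (Fin n) ℂ := W.submatrix id ⇑ρ with hW'
  have hW'u : W' ∈ Matrix.unitaryGroup (Fin n) ℂ := submatrix_mem_unitary hW ρ
  refine ⟨W' * Vᴴ, ?_, ?_⟩
  · rw [Matrix.mem_unitaryGroup_iff']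
    rw [Matrix.star_eq_conjTranspose, Matrix.conjTranspose_mul,
      Matrix.conjTranspose_conjTranspose]
    calc V * W'ᴴ * (W' * Vᴴ) = V * (W'ᴴ * W') * Vᴴ := by simp only [mul_assoc]
      _ = 1 := by
        rw [← Matrix.star_eq_conjTranspose W', Matrix.mem_unitaryGroup_iff'.mp hW'u, mul_one,
          ← Matrix.star_eq_conjTranspose V]
        exact Matrix.mem_unitaryGroup_iff.mp hV
  · have hdecomp : W * Matrix.diagonal (Complex.ofReal ∘ e) * Wᴴ
        = W' * Matrix.diagonal ((Complex.ofReal ∘ e) ∘ ρ) * W'ᴴ :=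
      (reindex_decomp W ρ (Complex.ofReal ∘ e)).symm
    have hUCU : (W' * Vᴴ)ᴴ * (W * Matrix.diagonal (Complex.ofReal ∘ e) * Wᴴ) * (W' * Vᴴ)
        = V * Matrix.diagonal ((Complex.ofReal ∘ e) ∘ ρ) * Vᴴ := by
      rw [hdecomp, Matrix.conjTranspose_mul, Matrix.conjTranspose_conjTranspose]
      have h1 : W'ᴴ * W' = 1 := by
        rw [← Matrix.star_eq_conjTranspose W']; exact Matrix.mem_unitaryGroup_iff'.mp hW'u
      calc V * W'ᴴ * (W' * Matrix.diagonal ((Complex.ofReal ∘ e) ∘ ρ) * W'ᴴ) * (W' * Vᴴ)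
          = V * (W'ᴴ * W') * Matrix.diagonal ((Complex.ofReal ∘ e) ∘ ρ) * (W'ᴴ * W') * Vᴴ := by
            simp only [mul_assoc]
        _ = V * Matrix.diagonal ((Complex.ofReal ∘ e) ∘ ρ) * Vᴴ := by
            rw [h1, mul_one, Matrix.mul_one]
    rw [hUCU]
    have : V * Matrix.diagonal ((Complex.ofReal ∘ e) ∘ ρ) * Vᴴ
        - V * Matrix.diagonal (Complex.ofReal ∘ d) * Vᴴ
        = V * (Matrix.diagonal (fun i => ((e (ρ i) - d i : ℝ) : ℂ))) * Vᴴ := by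
      have hds : (Complex.ofReal ∘ e) ∘ ⇑ρ - Complex.ofReal ∘ d
          = fun i => ((e (ρ i) - d i : ℝ) : ℂ) := by
        funext i
        simp
      rw [← Matrix.sub_mul, ← Matrix.mul_sub, Matrix.diagonal_sub]
      congr 1
      · congr 1
        funext i
        simpa using congrFun hds i
    rw [this]
    refine Matrix.PosSemidef.mul_mul_conjTranspose_same ?_ V
    refine Matrix.posSemidef_diagonal_iff.mpr fun i => ?_
    rw [Complex.zero_le_real]
    linarith [hde i]

end Aux

/-- For a monotone convex `f` on an interval `I ∋ 0` with `f 0 ≤ 0`, a Hermitian `A` with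
spectrum in `I`, and a contraction `X`, there is a unitary `U` with
`f(X A X*) ≤ U* X f(A) X* U` in the Loewner order. -/
theorem stmt3 {n : ℕ} (I : Set ℝ) (hI : Convex ℝ I) (h0I : (0 : ℝ) ∈ I)
    (f : ℝ → ℝ) (hmono : MonotoneOn f I ∨ AntitoneOn f I) (hconv : ConvexOn ℝ I f)
    (hf0 : f 0 ≤ 0)
    (A : Matrix (Fin n) (Fin n) ℂ) (hA : A.IsHermitian) (hspec : ∀ i, hA.eigenvalues i ∈ I)
    (X : Matrix (Fin n) (Fin n) ℂ) (hX : (1 - Xᴴ * X).PosSemidef) :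
    ∃ U ∈ Matrix.unitaryGroup (Fin n) ℂ,
      loewnerLE (hermCFC (X * A * Xᴴ) f) (Uᴴ * X * hermCFC A f * Xᴴ * U) := by
  have hCfcA : (hA.cfc f).IsHermitian := Aux.cfc_isHermitian hA f
  have hB : (X * A * Xᴴ).IsHermitian := Matrix.isHermitian_mul_mul_conjTranspose X hA
  have hC : (X * hA.cfc f * Xᴴ).IsHermitian := Matrix.isHermitian_mul_mul_conjTranspose X hCfcA
  have hcomp := Aux.eig_compare hI h0I hmono hconv hf0 hA hspec hX hB hC
  obtain ⟨U, hU, hpsd⟩ := Aux.stepC (hB.eigenvectorUnitary).2 (hC.eigenvectorUnitary).2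
    (fun i => f (hB.eigenvalues i)) hC.eigenvalues hcomp
  refine ⟨U, hU, ?_⟩
  rw [loewnerLE]
  have hPdef : hermCFC (X * A * Xᴴ) f = (hB.eigenvectorUnitary : Matrix (Fin n) (Fin n) ℂ)
      * Matrix.diagonal (Complex.ofReal ∘ fun i => f (hB.eigenvalues i))
      * (hB.eigenvectorUnitary : Matrix (Fin n) (Fin n) ℂ)ᴴ := by
    rw [hermCFC, dif_pos hB, Matrix.IsHermitian.cfc, Unitary.conjStarAlgAut_apply, Matrix.star_eq_conjTranspose]
    rfl
  have hCdef : X * hA.cfc f * Xᴴ = (hC.eigenvectorUnitary : Matrix (Fin n) (Fin n) ℂ)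
      * Matrix.diagonal (Complex.ofReal ∘ hC.eigenvalues)
      * (hC.eigenvectorUnitary : Matrix (Fin n) (Fin n) ℂ)ᴴ := by
    have h := hC.spectral_theorem
    rw [Unitary.conjStarAlgAut_apply, Matrix.star_eq_conjTranspose] at h
    exact h
  have hAfc : hermCFC A f = hA.cfc f := dif_pos hA
  rw [hAfc]
  have hassoc : Uᴴ * X * hA.cfc f * Xᴴ * U = Uᴴ * (X * hA.cfc f * Xᴴ) * U := by
    simp only [mul_assoc]
  rw [hassoc, hCdef, hPdef]
  exact hpsd
end

section
/- There exist 2×2 positive semidefinite matrices A and B such that for every unitary matrix U, the inequality U A² U* + U B² U* ≤ (A+B)² fails in the Loewner order. Specifically one can take A = [[1,0],[0,0]] and B = [[1/2,1/2],[1/2,1/2]]. -/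
open Matrix
open scoped ComplexOrder Kronecker

set_option maxHeartbeats 1000000 in
/-- There are 2×2 positive semidefinite matrices `A, B` (explicitly,
`A = [[1,0],[0,0]]`, `B = [[1/2,1/2],[1/2,1/2]]`) such that for every unitary `U`,
`U A² U* + U B² U* ≤ (A+B)²` fails in the Loewner order. -/
theorem stmt5 :
    ∃ A B : Matrix (Fin 2) (Fin 2) ℂ,
      A.PosSemidef ∧ B.PosSemidef ∧
      A = !![1, 0; 0, 0] ∧ B = !![1/2, 1/2; 1/2, 1/2] ∧
      ∀ U ∈ Matrix.unitaryGroup (Fin 2) ℂ,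
        ¬ loewnerLE (U * A ^ 2 * Uᴴ + U * B ^ 2 * Uᴴ) ((A + B) ^ 2) := by
  refine ⟨!![1, 0; 0, 0], !![1/2, 1/2; 1/2, 1/2], ?_, ?_, rfl, rfl, ?_⟩
  · have h := Matrix.posSemidef_self_mul_conjTranspose (!![1, 0; 0, 0] : Matrix (Fin 2) (Fin 2) ℂ)
    have e : (!![1, 0; 0, 0] : Matrix (Fin 2) (Fin 2) ℂ) * !![1, 0; 0, 0]ᴴ = !![1,0;0,0] := by
      have hc : (!![1, (0:ℂ); 0, 0] : Matrix (Fin 2) (Fin 2) ℂ)ᴴ = !![1, 0; 0, 0] := by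
        ext i j
        fin_cases i <;> fin_cases j <;> simp [Matrix.conjTranspose_apply]
      rw [hc]
      ext i j
      fin_cases i <;> fin_cases j <;> simp [Matrix.mul_apply, Fin.sum_univ_two]
    rwa [e] at h
  · have h := Matrix.posSemidef_self_mul_conjTranspose
      (!![1/2, 1/2; 1/2, 1/2] : Matrix (Fin 2) (Fin 2) ℂ)
    have e : (!![1/2, 1/2; 1/2, 1/2] : Matrix (Fin 2) (Fin 2) ℂ) * !![1/2, 1/2; 1/2, 1/2]ᴴ
        = !![1/2, 1/2; 1/2, 1/2] := by
      have hc : (!![(1:ℂ)/2, 1/2; 1/2, 1/2] : Matrix (Fin 2) (Fin 2) ℂ)ᴴ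
          = !![1/2, 1/2; 1/2, 1/2] := by
        ext i j
        fin_cases i <;> fin_cases j <;> simp [Matrix.conjTranspose_apply, map_inv₀, map_ofNat]
      rw [hc]
      ext i j
      fin_cases i <;> fin_cases j <;> simp [Matrix.mul_apply, Fin.sum_univ_two] <;> norm_num
    rwa [e] at h
  · intro U hU h
    have hct : (!![1, (1:ℂ)/2; 1/2, 0] : Matrix (Fin 2) (Fin 2) ℂ)ᴴ = !![1, 1/2; 1/2, 0] := by
      ext i j
      fin_cases i <;> fin_cases j <;> simp [Matrix.conjTranspose_apply, map_inv₀, map_ofNat]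
    have hK : ((!![1, 1/2; 1/2, 0] : Matrix (Fin 2) (Fin 2) ℂ)
        * !![1, 1/2; 1/2, 0]ᴴ).PosSemidef :=
      Matrix.posSemidef_self_mul_conjTranspose _
    have hUK : (U * (!![1, 1/2; 1/2, 0] * !![1, 1/2; 1/2, 0]ᴴ) * Uᴴ).PosSemidef :=
      hK.mul_mul_conjTranspose_same U
    have hsum := h.add hUK
    have hUU : U * Uᴴ = 1 := by
      simpa [star_eq_conjTranspose] using (Matrix.mem_unitaryGroup_iff.mp hU)
    have h2 : (!![1, 0; 0, 0] : Matrix (Fin 2) (Fin 2) ℂ) ^ 2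
        + !![1/2, 1/2; 1/2, 1/2] ^ 2
        = !![1, 1/2; 1/2, 0] * !![1, 1/2; 1/2, 0]ᴴ
          + (1/4 : ℂ) • (1 : Matrix (Fin 2) (Fin 2) ℂ) := by
      rw [hct]
      ext i j
      fin_cases i <;> fin_cases j <;>
        simp [pow_two, Matrix.mul_apply, Fin.sum_univ_two, Matrix.one_apply,
          Matrix.smul_apply] <;> norm_num
    have h1 : U * !![1, 0; 0, 0] ^ 2 * Uᴴ + U * !![1/2, 1/2; 1/2, 1/2] ^ 2 * Uᴴ
        = U * (!![1, 1/2; 1/2, 0] * !![1, 1/2; 1/2, 0]ᴴ) * Uᴴ + (1/4 : ℂ) • 1 := by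
      calc U * !![1, 0; 0, 0] ^ 2 * Uᴴ + U * !![1/2, 1/2; 1/2, 1/2] ^ 2 * Uᴴ
          = U * (!![1, 0; 0, 0] ^ 2 + !![1/2, 1/2; 1/2, 1/2] ^ 2) * Uᴴ := by noncomm_ring
        _ = U * (!![1, 1/2; 1/2, 0] * !![1, 1/2; 1/2, 0]ᴴ + (1/4 : ℂ) • 1) * Uᴴ := by rw [h2]
        _ = U * (!![1, 1/2; 1/2, 0] * !![1, 1/2; 1/2, 0]ᴴ) * Uᴴ + (1/4 : ℂ) • (U * Uᴴ) := by
            rw [Matrix.mul_add, Matrix.add_mul, Matrix.mul_smul, Matrix.smul_mul, Matrix.mul_one]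
        _ = _ := by rw [hUU]
    have key : ((!![1, 0; 0, 0] + !![1/2, 1/2; 1/2, 1/2] : Matrix (Fin 2) (Fin 2) ℂ) ^ 2
        - (U * !![1, 0; 0, 0] ^ 2 * Uᴴ + U * !![1/2, 1/2; 1/2, 1/2] ^ 2 * Uᴴ)
        + U * (!![1, 1/2; 1/2, 0] * !![1, 1/2; 1/2, 0]ᴴ) * Uᴴ)
        = !![9/4, 1; 1, 1/4] := by
      rw [h1]
      have cancel : ∀ X Y Z : Matrix (Fin 2) (Fin 2) ℂ, X - (Y + Z) + Y = X - Z := by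
        intro X Y Z; abel
      rw [cancel]
      ext i j
      fin_cases i <;> fin_cases j <;>
        simp [pow_two, Matrix.mul_apply, Fin.sum_univ_two, Matrix.one_apply,
          Matrix.smul_apply] <;> norm_num
    rw [key] at hsum
    have h5 := hsum.dotProduct_mulVec_nonneg ![1, -2]
    simp [dotProduct, Matrix.mulVec, Fin.sum_univ_two] at h5
    norm_num [Complex.le_def] at h5
end

section
/- Let f be a monotone convex function on an interval I, let Φ : M_m(ℂ) → M_n(ℂ) be a positive unital linear map, and let A be an m×m Hermitian matrix with spectrum in I. Then for every 1 ≤ j ≤ n, the j-th largest eigenvalue of f(Φ(A)) is at most the j-th largest eigenvalue of Φ(f(A)). Equivalently, there is a unitary U with f(Φ(A)) ≤ U Φ(f(A)) U*. -/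
open Matrix
open scoped ComplexOrder Kronecker

namespace Stmt6Aux

variable {n : ℕ}

noncomputable def cg (U : Matrix (Fin n) (Fin n) ℂ) (d : Fin n → ℝ) : Matrix (Fin n) (Fin n) ℂ :=
  U * Matrix.diagonal (fun i => (d i : ℂ)) * Uᴴ

lemma star_coe (d : Fin n → ℝ) : star (fun i => ((d i : ℂ))) = fun i => ((d i : ℂ)) := by
  funext i; simp

lemma cg_isHermitian (U : Matrix (Fin n) (Fin n) ℂ) (d : Fin n → ℝ) : (cg U d).IsHermitian := by
  unfold cg Matrix.IsHermitian
  rw [conjTranspose_mul, conjTranspose_mul, conjTranspose_conjTranspose, diagonal_conjTranspose,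
    star_coe, Matrix.mul_assoc]

lemma diag_mulVec (c : Fin n → ℂ) (y : Fin n → ℂ) (i : Fin n) :
    (Matrix.diagonal c *ᵥ y) i = c i * y i := by
  simp [mulVec, diagonal, dotProduct]

lemma quad (U : Matrix (Fin n) (Fin n) ℂ) (d : Fin n → ℝ) (x : Fin n → ℂ) :
    star x ⬝ᵥ (cg U d *ᵥ x) =
      ((∑ i, d i * Complex.normSq ((Uᴴ *ᵥ x) i) : ℝ) : ℂ) := by
  set y := Uᴴ *ᵥ x with hy
  have hsy : star y = star x ᵥ* U := by
    rw [hy, star_mulVec, conjTranspose_conjTranspose]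
  have h1 : cg U d *ᵥ x = U *ᵥ (Matrix.diagonal (fun i => (d i : ℂ)) *ᵥ y) := by
    simp [cg, ← mulVec_mulVec, hy]
  rw [h1, dotProduct_mulVec, ← hsy, dotProduct]
  push_cast
  apply Finset.sum_congr rfl
  intro i _
  rw [diag_mulVec]
  simp only [Pi.star_apply, Complex.star_def]
  rw [show (starRingEnd ℂ) (y i) * (↑(d i) * y i) = ↑(d i) * ((starRingEnd ℂ) (y i) * (y i)) by
    ring, ← Complex.normSq_eq_conj_mul_self]

lemma norm_via {U : Matrix (Fin n) (Fin n) ℂ} (hU : U ∈ Matrix.unitaryGroup (Fin n) ℂ)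
    (x : Fin n → ℂ) :
    star x ⬝ᵥ x = ((∑ i, Complex.normSq ((Uᴴ *ᵥ x) i) : ℝ) : ℂ) := by
  have := quad U (fun _ => (1:ℝ)) x
  have h1 : U * Uᴴ = 1 := by
    have := mem_unitaryGroup_iff.mp hU
    rwa [star_eq_conjTranspose] at this
  simpa [cg, Matrix.mul_assoc, h1] using this

lemma cg_psd (U : Matrix (Fin n) (Fin n) ℂ) {d : Fin n → ℝ} (hd : ∀ i, 0 ≤ d i) :
    (cg U d).PosSemidef := by
  refine PosSemidef.of_dotProduct_mulVec_nonneg (cg_isHermitian U d) fun x => ?_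
  rw [quad]
  rw [Complex.zero_le_real]
  exact Finset.sum_nonneg fun i _ => mul_nonneg (hd i) (Complex.normSq_nonneg _)

lemma cg_sub (U : Matrix (Fin n) (Fin n) ℂ) (d₁ d₂ : Fin n → ℝ) :
    cg U (d₁ - d₂) = cg U d₁ - cg U d₂ := by
  unfold cg
  have h : (fun i => (((d₁ - d₂) i : ℝ) : ℂ))
      = (fun i => ((d₁ i : ℝ) : ℂ) - ((d₂ i : ℝ) : ℂ)) := by
    funext i; simp
  rw [h, ← diagonal_sub, Matrix.mul_sub, Matrix.sub_mul]

lemma cg_add (U : Matrix (Fin n) (Fin n) ℂ) (d₁ d₂ : Fin n → ℝ) :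
    cg U (d₁ + d₂) = cg U d₁ + cg U d₂ := by
  unfold cg
  have h : (fun i => (((d₁ + d₂) i : ℝ) : ℂ))
      = (fun i => ((d₁ i : ℝ) : ℂ) + ((d₂ i : ℝ) : ℂ)) := by
    funext i; simp
  rw [h, ← diagonal_add, Matrix.mul_add, Matrix.add_mul]

lemma cg_smul (U : Matrix (Fin n) (Fin n) ℂ) (c : ℝ) (d : Fin n → ℝ) :
    cg U (c • d) = (c : ℂ) • cg U d := by
  unfold cg
  have h : (fun i => (((c • d) i : ℝ) : ℂ)) = (fun i => (c : ℂ) • ((d i : ℝ) : ℂ)) := by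
    funext i; simp
  rw [h]
  rw [show (Matrix.diagonal fun i => (c:ℂ) • ((d i : ℝ) : ℂ))
      = (c:ℂ) • Matrix.diagonal (fun i => ((d i : ℝ) : ℂ)) from diagonal_smul (c:ℂ) (fun i => ((d i : ℝ) : ℂ)),
    Matrix.mul_smul, Matrix.smul_mul]

lemma cg_const {U : Matrix (Fin n) (Fin n) ℂ} (hU : U ∈ Matrix.unitaryGroup (Fin n) ℂ) (c : ℝ) :
    cg U (fun _ => c) = (c : ℂ) • 1 := by
  have h1 : U * Uᴴ = 1 := by
    have := mem_unitaryGroup_iff.mp hU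
    rwa [star_eq_conjTranspose] at this
  unfold cg
  rw [← Matrix.smul_one_eq_diagonal, Matrix.mul_smul, Matrix.smul_mul, mul_one, h1]

lemma psd_zero : (0 : Matrix (Fin n) (Fin n) ℂ).PosSemidef := by
  refine ⟨isHermitian_zero, fun x => ?_⟩
  simp

/-- Weyl-type monotonicity: if `V q Vᴴ - U p Uᴴ ⪰ 0` then the sorted (ascending) values of `p`
are dominated by those of `q`. -/
lemma weyl {U V : Matrix (Fin n) (Fin n) ℂ} (hU : U ∈ Matrix.unitaryGroup (Fin n) ℂ)
    (hV : V ∈ Matrix.unitaryGroup (Fin n) ℂ) (p q : Fin n → ℝ)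
    (hpsd : (cg V q - cg U p).PosSemidef) (k : Fin n) :
    p (Tuple.sort p k) ≤ q (Tuple.sort q k) := by
  classical
  set σ := Tuple.sort p with hσ
  set τ := Tuple.sort q with hτ
  set b := Pi.basisFun ℂ (Fin n) with hb
  have hrank : ∀ (E : Finset (Fin n)),
      Module.finrank ℂ (Submodule.span ℂ (b '' ↑E)) = E.card := by
    intro E
    have hli : LinearIndependent ℂ (fun i : E => b i) :=
      b.linearIndependent.comp Subtype.val Subtype.val_injective
    have h2 := finrank_span_eq_card hli
    rw [Fintype.card_coe] at h2
    have h3 : (⇑b '' ↑E) = Set.range fun i : E => b i := by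
      rw [← Set.range_restrict]; rfl
    rw [h3]
    exact h2
  -- the two unitaries as linear equivalences
  have mkEquiv : ∀ (W : Matrix (Fin n) (Fin n) ℂ), W ∈ Matrix.unitaryGroup (Fin n) ℂ →
      ∃ e : (Fin n → ℂ) ≃ₗ[ℂ] (Fin n → ℂ), ∀ v, e v = W *ᵥ v := by
    intro W hW
    refine ⟨LinearEquiv.ofLinear (Matrix.mulVecLin W) (Matrix.mulVecLin (star W)) ?_ ?_, fun v => rfl⟩
    · rw [← Matrix.mulVecLin_mul, mem_unitaryGroup_iff.mp hW, Matrix.mulVecLin_one]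
    · rw [← Matrix.mulVecLin_mul, mem_unitaryGroup_iff'.mp hW, Matrix.mulVecLin_one]
  obtain ⟨eU, heU⟩ := mkEquiv U hU
  obtain ⟨eV, heV⟩ := mkEquiv V hV
  set E1 : Finset (Fin n) := (Finset.Ici k).image σ with hE1
  set E2 : Finset (Fin n) := (Finset.Iic k).image τ with hE2
  set S := (Submodule.span ℂ (b '' ↑E1)).map (eU : (Fin n → ℂ) →ₗ[ℂ] (Fin n → ℂ)) with hS
  set T := (Submodule.span ℂ (b '' ↑E2)).map (eV : (Fin n → ℂ) →ₗ[ℂ] (Fin n → ℂ)) with hT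
  have hSr : Module.finrank ℂ S = n - k := by
    rw [hS, LinearEquiv.finrank_map_eq, hrank, hE1,
      Finset.card_image_of_injective _ σ.injective, Fin.card_Ici]
  have hTr : Module.finrank ℂ T = k + 1 := by
    rw [hT, LinearEquiv.finrank_map_eq, hrank, hE2,
      Finset.card_image_of_injective _ τ.injective, Fin.card_Iic]
  have hinf : 0 < Module.finrank ℂ ↥(S ⊓ T) := by
    have hsum := Submodule.finrank_sup_add_finrank_inf_eq S T
    have hle : Module.finrank ℂ ↥(S ⊔ T) ≤ n := by
      have h3 := Submodule.finrank_le (S ⊔ T)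
      simpa [Module.finrank_pi] using h3
    have hk := k.isLt
    omega
  have : Nontrivial ↥(S ⊓ T) := Module.nontrivial_of_finrank_pos hinf
  obtain ⟨⟨x, hxST⟩, hx0⟩ := exists_ne (0 : ↥(S ⊓ T))
  have hxne : x ≠ 0 := by
    intro h
    apply hx0
    exact Subtype.ext h
  obtain ⟨hxS, hxT⟩ := Submodule.mem_inf.mp hxST
  -- supports
  have hsupp : ∀ (W : Matrix (Fin n) (Fin n) ℂ), W ∈ Matrix.unitaryGroup (Fin n) ℂ →
      ∀ (e : (Fin n → ℂ) ≃ₗ[ℂ] (Fin n → ℂ)), (∀ v, e v = W *ᵥ v) →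
      ∀ (E : Finset (Fin n)),
      x ∈ (Submodule.span ℂ (b '' ↑E)).map (e : (Fin n → ℂ) →ₗ[ℂ] (Fin n → ℂ)) →
      ∀ i ∉ E, (Wᴴ *ᵥ x) i = 0 := by
    intro W hW e he E hmem i hi
    obtain ⟨w, hw, rfl⟩ := Submodule.mem_map.mp hmem
    have hwx : Wᴴ *ᵥ (e w) = w := by
      rw [he, mulVec_mulVec, ← star_eq_conjTranspose, mem_unitaryGroup_iff'.mp hW, one_mulVec]
    simp only [LinearEquiv.coe_coe]
    rw [hwx]
    have := b.mem_span_image.mp hw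
    have hns : i ∉ (b.repr w).support := fun hc => hi (by exact_mod_cast this hc)
    have := Finsupp.notMem_support_iff.mp hns
    rwa [hb, Pi.basisFun_repr] at this
  have hyS := hsupp U hU eU heU E1 hxS
  have hzT := hsupp V hV eV heV E2 hxT
  set y := Uᴴ *ᵥ x with hy
  set z := Vᴴ *ᵥ x with hz
  set N : ℝ := ∑ i, Complex.normSq (y i) with hN
  have hNz : N = ∑ i, Complex.normSq (z i) := by
    have h1 := norm_via hU x
    have h2 := norm_via hV x
    rw [h1] at h2
    exact_mod_cast h2
  have hNpos : 0 < N := by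
    rcases (lt_or_eq_of_le (Finset.sum_nonneg
      (fun i _ => Complex.normSq_nonneg (y i)) : (0:ℝ) ≤ N)) with h | h
    · exact h
    · exfalso
      have hy0 : ∀ i, Complex.normSq (y i) = 0 := by
        intro i
        have := (Finset.sum_eq_zero_iff_of_nonneg
          (fun i _ => Complex.normSq_nonneg (y i))).mp h.symm i (Finset.mem_univ i)
        exact this
      have : y = 0 := funext fun i => Complex.normSq_eq_zero.mp (hy0 i)
      apply hxne
      have hxy : U *ᵥ y = x := by
        rw [hy, mulVec_mulVec, ← star_eq_conjTranspose, mem_unitaryGroup_iff.mp hU, one_mulVec]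
      rw [← hxy, this, mulVec_zero]
  -- lower bound on the p-form
  have hlow : p (σ k) * N ≤ ∑ i, p i * Complex.normSq (y i) := by
    rw [hN, Finset.mul_sum]
    apply Finset.sum_le_sum
    intro i _
    by_cases hi : i ∈ E1
    · obtain ⟨i', hi', rfl⟩ := Finset.mem_image.mp hi
      exact mul_le_mul_of_nonneg_right (Tuple.monotone_sort p (Finset.mem_Ici.mp hi'))
        (Complex.normSq_nonneg _)
    · rw [hyS i hi]
      simp
  have hhigh : ∑ i, q i * Complex.normSq (z i) ≤ q (τ k) * N := by
    rw [hNz, Finset.mul_sum]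
    apply Finset.sum_le_sum
    intro i _
    by_cases hi : i ∈ E2
    · obtain ⟨i', hi', rfl⟩ := Finset.mem_image.mp hi
      exact mul_le_mul_of_nonneg_right (Tuple.monotone_sort q (Finset.mem_Iic.mp hi'))
        (Complex.normSq_nonneg _)
    · rw [hzT i hi]
      simp
  -- the PSD comparison
  have hcmp : (∑ i, p i * Complex.normSq (y i)) ≤ ∑ i, q i * Complex.normSq (z i) := by
    have h0 := hpsd.dotProduct_mulVec_nonneg x
    rw [sub_mulVec, dotProduct_sub, quad, quad] at h0
    rw [← Complex.ofReal_sub, Complex.zero_le_real, sub_nonneg] at h0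
    exact h0
  have := le_trans hlow (le_trans hcmp hhigh)
  exact le_of_mul_le_mul_right (by linarith [this]) hNpos



lemma spectral {M : Matrix (Fin n) (Fin n) ℂ} (hM : M.IsHermitian) :
    M = cg (hM.eigenvectorUnitary : Matrix (Fin n) (Fin n) ℂ) hM.eigenvalues := by
  conv_lhs => rw [hM.spectral_theorem]
  rfl

lemma cfc_eq_cg {M : Matrix (Fin n) (Fin n) ℂ} (hM : M.IsHermitian) (f : ℝ → ℝ) :
    hM.cfc f = cg (hM.eigenvectorUnitary : Matrix (Fin n) (Fin n) ℂ) (f ∘ hM.eigenvalues) :=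
  rfl

lemma sort_comp {w : Fin n → ℝ} {σ : Equiv.Perm (Fin n)} (hmono : Monotone (w ∘ σ)) (k : Fin n) :
    w (Tuple.sort w k) = w (σ k) := by
  have h := (Tuple.comp_sort_eq_comp_iff_monotone (f := w) (σ := σ)).mpr hmono
  exact (congrFun h k).symm

/-- permutation matrix -/
def permMat (τ : Equiv.Perm (Fin n)) : Matrix (Fin n) (Fin n) ℂ :=
  Matrix.of fun i j => if j = τ i then 1 else 0

lemma permMat_mem (τ : Equiv.Perm (Fin n)) : permMat τ ∈ Matrix.unitaryGroup (Fin n) ℂ := by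
  rw [mem_unitaryGroup_iff]
  ext i j
  rw [Matrix.mul_apply]
  have hterm : ∀ a, permMat τ i a * (star (permMat τ)) a j
      = if a = τ i then (if a = τ j then (1:ℂ) else 0) else 0 := by
    intro a
    simp only [permMat, Matrix.star_apply, Matrix.of_apply]
    by_cases h1 : a = τ i <;> by_cases h2 : a = τ j <;> simp [h1, h2]
  rw [Finset.sum_congr rfl (fun a _ => hterm a), Finset.sum_ite_eq' Finset.univ (τ i)]
  simp only [Finset.mem_univ, if_true]
  by_cases h : i = j
  · subst h; simp
  · rw [if_neg (fun hc => h (τ.injective hc)), Matrix.one_apply_ne h]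

lemma permMat_conj (τ : Equiv.Perm (Fin n)) (d : Fin n → ℂ) :
    permMat τ * Matrix.diagonal d * (permMat τ)ᴴ = Matrix.diagonal (fun i => d (τ i)) := by
  ext i j
  rw [Matrix.mul_apply]
  simp only [permMat, Matrix.conjTranspose_apply, Matrix.of_apply, Matrix.mul_apply,
    Matrix.diagonal_apply, apply_ite, star_one, star_zero]
  simp only [ite_mul, one_mul, zero_mul, mul_ite, mul_one, mul_zero, Finset.sum_ite_eq,
    Finset.sum_ite_eq', Finset.mem_univ, if_true]
  by_cases h : i = j
  · subst h; simp
  · simp only [h, if_false, EmbeddingLike.apply_eq_iff_eq]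
    rw [if_neg (fun hc => h hc.symm)]

lemma cg_conj {W V : Matrix (Fin n) (Fin n) ℂ} (hV : V ∈ Matrix.unitaryGroup (Fin n) ℂ)
    (τ : Equiv.Perm (Fin n)) (q : Fin n → ℝ) :
    (W * permMat τ * Vᴴ) * cg V q * (W * permMat τ * Vᴴ)ᴴ = cg W (fun i => q (τ i)) := by
  have hVV : Vᴴ * V = 1 := by
    have := mem_unitaryGroup_iff'.mp hV
    rwa [star_eq_conjTranspose] at this
  have hcan : ∀ X : Matrix (Fin n) (Fin n) ℂ, X * Vᴴ * V = X := fun X => by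
    rw [Matrix.mul_assoc, hVV, Matrix.mul_one]
  unfold cg
  rw [conjTranspose_mul, conjTranspose_mul, conjTranspose_conjTranspose]
  simp only [← Matrix.mul_assoc]
  rw [hcan, hcan]
  have := permMat_conj τ (fun i => (q i : ℂ))
  calc W * permMat τ * Matrix.diagonal (fun i => (q i : ℂ)) * (permMat τ)ᴴ * Wᴴ
      = W * (permMat τ * Matrix.diagonal (fun i => (q i : ℂ)) * (permMat τ)ᴴ) * Wᴴ := by
        simp only [← Matrix.mul_assoc]
    _ = W * Matrix.diagonal (fun i => (q (τ i) : ℂ)) * Wᴴ := by rw [this]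

/-- Chord of a convex function: above on the inside, below on the outside. -/
lemma chord {I : Set ℝ} {f : ℝ → ℝ} (hconv : ConvexOn ℝ I f) {p q : ℝ}
    (hp : p ∈ I) (hq : q ∈ I) (hpq : p < q) :
    (∀ t ∈ I, p ≤ t → t ≤ q →
        f t ≤ (f q - f p)/(q - p) * t + (f p - (f q - f p)/(q - p) * p)) ∧
    (∀ t ∈ I, t ≤ p ∨ q ≤ t →
        (f q - f p)/(q - p) * t + (f p - (f q - f p)/(q - p) * p) ≤ f t) := by
  have hqp : (0:ℝ) < q - p := by linarith
  have expand : ∀ t : ℝ, (f q - f p)/(q - p) * t + (f p - (f q - f p)/(q - p) * p)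
      = ((q - t) * f p + (t - p) * f q)/(q - p) := by
    intro t; field_simp; ring
  constructor
  · intro t ht hpt htq
    have ha : 0 ≤ (q - t)/(q - p) := div_nonneg (by linarith) hqp.le
    have hb : 0 ≤ (t - p)/(q - p) := div_nonneg (by linarith) hqp.le
    have hab : (q - t)/(q - p) + (t - p)/(q - p) = 1 := by field_simp; ring
    have h := hconv.2 hp hq ha hb hab
    have hx : ((q - t)/(q - p)) • p + ((t - p)/(q - p)) • q = t := by
      simp only [smul_eq_mul]; field_simp; ring
    rw [hx, smul_eq_mul, smul_eq_mul] at h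
    rw [expand, le_div_iff₀ hqp]
    rw [div_mul_eq_mul_div, div_mul_eq_mul_div, ← add_div, le_div_iff₀ hqp] at h
    linarith
  · intro t ht hcase
    rcases hcase with hle | hge
    · -- t ≤ p < q ; p is a convex combination of t and q
      have hqt : (0:ℝ) < q - t := by linarith
      have ha : 0 ≤ (q - p)/(q - t) := div_nonneg (by linarith) hqt.le
      have hb : 0 ≤ (p - t)/(q - t) := div_nonneg (by linarith) hqt.le
      have hab : (q - p)/(q - t) + (p - t)/(q - t) = 1 := by field_simp; ring
      have h := hconv.2 ht hq ha hb hab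
      have hx : ((q - p)/(q - t)) • t + ((p - t)/(q - t)) • q = p := by
        simp only [smul_eq_mul]; field_simp; ring
      rw [hx, smul_eq_mul, smul_eq_mul] at h
      rw [div_mul_eq_mul_div, div_mul_eq_mul_div, ← add_div, le_div_iff₀ hqt] at h
      rw [expand, div_le_iff₀ hqp]
      nlinarith
    · -- p < q ≤ t ; q is a convex combination of p and t
      rcases eq_or_lt_of_le hge with rfl | hlt
      · rw [expand, div_le_iff₀ hqp]; ring_nf; linarith
      · have htp : (0:ℝ) < t - p := by linarith
        have ha : 0 ≤ (t - q)/(t - p) := div_nonneg (by linarith) htp.le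
        have hb : 0 ≤ (q - p)/(t - p) := div_nonneg (by linarith) htp.le
        have hab : (t - q)/(t - p) + (q - p)/(t - p) = 1 := by field_simp; ring
        have h := hconv.2 hp ht ha hb hab
        have hx : ((t - q)/(t - p)) • p + ((q - p)/(t - p)) • t = q := by
          simp only [smul_eq_mul]; field_simp; ring
        rw [hx, smul_eq_mul, smul_eq_mul] at h
        rw [div_mul_eq_mul_div, div_mul_eq_mul_div, ← add_div, le_div_iff₀ htp] at h
        rw [expand, div_le_iff₀ hqp]
        nlinarith

/-- Supporting line at `t0` lying below `f` at the given points. -/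
lemma line {I : Set ℝ} {f : ℝ → ℝ} (hconv : ConvexOn ℝ I f) {m : ℕ}
    (lam : Fin m → ℝ) (hlam : ∀ i, lam i ∈ I) {t0 : ℝ} (ht0 : t0 ∈ I) :
    ∃ α β : ℝ,
      (MonotoneOn f I → 0 ≤ α) ∧ (AntitoneOn f I → α ≤ 0) ∧
      f t0 ≤ α * t0 + β ∧ ∀ i, α * lam i + β ≤ f (lam i) := by
  classical
  by_cases hA : ∃ i, t0 < lam i
  · set Sq := Finset.univ.filter (fun i => t0 < lam i) with hSq
    have hne : Sq.Nonempty := by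
      obtain ⟨i0, hi0⟩ := hA
      exact ⟨i0, by simp [hSq, hi0]⟩
    obtain ⟨iq, hiq, hq⟩ := Finset.exists_mem_eq_inf' hne lam
    have htq : t0 < lam iq := by
      rw [← hq, Finset.lt_inf'_iff]
      intro i hi
      exact (Finset.mem_filter.mp hi).2
    have hqI : lam iq ∈ I := hlam iq
    obtain ⟨hin, hout⟩ := chord hconv ht0 hqI htq
    refine ⟨(f (lam iq) - f t0)/(lam iq - t0),
      f t0 - (f (lam iq) - f t0)/(lam iq - t0) * t0, ?_, ?_, ?_, ?_⟩
    · intro hmono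
      exact div_nonneg (by linarith [hmono ht0 hqI htq.le]) (by linarith)
    · intro hanti
      exact div_nonpos_of_nonpos_of_nonneg (by linarith [hanti ht0 hqI htq.le]) (by linarith)
    · exact hin t0 ht0 le_rfl htq.le
    · intro i
      by_cases hi : t0 < lam i
      · refine hout (lam i) (hlam i) (Or.inr ?_)
        rw [← hq]
        exact Finset.inf'_le lam (by simp [hSq, hi])
      · exact hout (lam i) (hlam i) (Or.inl (not_lt.mp hi))
  · by_cases hB : ∃ i, lam i < t0
    · set Sp := Finset.univ.filter (fun i => lam i < t0) with hSp
      have hne : Sp.Nonempty := by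
        obtain ⟨i0, hi0⟩ := hB
        exact ⟨i0, by simp [hSp, hi0]⟩
      obtain ⟨ip, hip, hp⟩ := Finset.exists_mem_eq_sup' hne lam
      have hpt : lam ip < t0 := by
        rw [← hp, Finset.sup'_lt_iff]
        intro i hi
        exact (Finset.mem_filter.mp hi).2
      have hpI : lam ip ∈ I := hlam ip
      obtain ⟨hin, hout⟩ := chord hconv hpI ht0 hpt
      refine ⟨(f t0 - f (lam ip))/(t0 - lam ip),
        f (lam ip) - (f t0 - f (lam ip))/(t0 - lam ip) * lam ip, ?_, ?_, ?_, ?_⟩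
      · intro hmono
        exact div_nonneg (by linarith [hmono hpI ht0 hpt.le]) (by linarith)
      · intro hanti
        exact div_nonpos_of_nonpos_of_nonneg (by linarith [hanti hpI ht0 hpt.le]) (by linarith)
      · exact hin t0 ht0 hpt.le le_rfl
      · intro i
        by_cases hi : lam i < t0
        · refine hout (lam i) (hlam i) (Or.inl ?_)
          rw [← hp]
          exact Finset.le_sup' lam (by simp [hSp, hi])
        · have : lam i = t0 := le_antisymm (not_lt.mp (fun h => hA ⟨i, h⟩)) (not_lt.mp hi)
          exact hout (lam i) (hlam i) (Or.inr (le_of_eq this.symm))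
    · refine ⟨0, f t0, fun _ => le_rfl, fun _ => le_rfl, by simp, ?_⟩
      intro i
      have : lam i = t0 := le_antisymm (not_lt.mp (fun h => hA ⟨i, h⟩))
        (not_lt.mp (fun h => hB ⟨i, h⟩))
      simp [this]


lemma smul_one_herm {k : ℕ} (c : ℝ) : (((c:ℂ)) • (1 : Matrix (Fin k) (Fin k) ℂ)).IsHermitian := by
  unfold Matrix.IsHermitian
  rw [conjTranspose_smul, conjTranspose_one]
  simp

lemma eig_le_of_psd {U : Matrix (Fin n) (Fin n) ℂ} (hU : U ∈ Matrix.unitaryGroup (Fin n) ℂ)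
    {p : Fin n → ℝ} {c : ℝ} (h : (((c:ℂ)) • 1 - cg U p).PosSemidef) (i : Fin n) : p i ≤ c := by
  have h2 := weyl hU hU p (fun _ => c) (by rwa [cg_const hU]) ((Tuple.sort p)⁻¹ i)
  simpa using h2

lemma le_eig_of_psd {U : Matrix (Fin n) (Fin n) ℂ} (hU : U ∈ Matrix.unitaryGroup (Fin n) ℂ)
    {p : Fin n → ℝ} {c : ℝ} (h : (cg U p - ((c:ℂ)) • 1).PosSemidef) (i : Fin n) : c ≤ p i := by
  have h2 := weyl hU hU (fun _ => c) p (by rwa [cg_const hU]) ((Tuple.sort p)⁻¹ i)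
  simpa using h2

end Stmt6Aux

open Stmt6Aux

/-- For a monotone convex `f` on an interval `I`, a positive unital linear map `Φ`, and a
Hermitian `A` with spectrum in `I`: `λⱼ↓(f(Φ(A))) ≤ λⱼ↓(Φ(f(A)))` for every `j`;
equivalently there is a unitary `U` with `f(Φ(A)) ≤ U Φ(f(A)) U*`. -/
theorem stmt6 {m n : ℕ} (I : Set ℝ) (hI : Convex ℝ I) (f : ℝ → ℝ)
    (hmono : MonotoneOn f I ∨ AntitoneOn f I) (hconv : ConvexOn ℝ I f)
    (Φ : Matrix (Fin m) (Fin m) ℂ →ₗ[ℂ] Matrix (Fin n) (Fin n) ℂ)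
    (hpos : ∀ X : Matrix (Fin m) (Fin m) ℂ, X.PosSemidef → (Φ X).PosSemidef)
    (hunital : Φ 1 = 1)
    (A : Matrix (Fin m) (Fin m) ℂ) (hA : A.IsHermitian) (hspec : ∀ i, hA.eigenvalues i ∈ I) :
    (∀ j, eigDesc (hermCFC (Φ A) f) j ≤ eigDesc (Φ (hermCFC A f)) j) ∧
      ∃ U ∈ Matrix.unitaryGroup (Fin n) ℂ,
        loewnerLE (hermCFC (Φ A) f) (U * Φ (hermCFC A f) * Uᴴ) := by
  classical
  rcases Nat.eq_zero_or_pos m with hm | hm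
  · subst hm
    have hn : n = 0 := by
      by_contra hn
      have h1 : (1 : Matrix (Fin 0) (Fin 0) ℂ) = 0 := Subsingleton.elim _ _
      have h2 := hunital
      rw [h1, map_zero] at h2
      have i : Fin n := ⟨0, Nat.pos_of_ne_zero hn⟩
      have h3 := congrFun (congrFun h2.symm i) i
      rw [Matrix.one_apply_eq] at h3
      simp at h3
    subst hn
    refine ⟨fun j => j.elim0, 1, one_mem _, ?_⟩
    unfold loewnerLE
    have h4 : (1 * Φ (hermCFC A f) * (1 : Matrix (Fin 0) (Fin 0) ℂ)ᴴ - hermCFC (Φ A) f) = 0 :=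
      Subsingleton.elim _ _
    rw [h4]
    exact psd_zero
  · have hnem : Nonempty (Fin m) := ⟨⟨0, hm⟩⟩
    set UA : Matrix (Fin m) (Fin m) ℂ := (hA.eigenvectorUnitary : Matrix (Fin m) (Fin m) ℂ) with hUAdef
    have hUA : UA ∈ Matrix.unitaryGroup (Fin m) ℂ := hA.eigenvectorUnitary.2
    set lamA := hA.eigenvalues with hlamAdef
    have hAcg : A = cg UA lamA := spectral hA
    have phiHerm : ∀ g : Fin m → ℝ, (Φ (cg UA g)).IsHermitian := by
      intro g
      have habs : ∀ i, (0:ℝ) ≤ ((g + (fun _ => ∑ i, |g i|)) : Fin m → ℝ) i := by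
        intro i
        have h1 : |g i| ≤ ∑ i, |g i| :=
          Finset.single_le_sum (fun i _ => abs_nonneg (g i)) (Finset.mem_univ i)
        have h2 := neg_abs_le (g i)
        simp only [Pi.add_apply]
        linarith
      have hpsd := hpos _ (cg_psd UA habs)
      have h2 : Φ (cg UA g) = Φ (cg UA (g + fun _ => ∑ i, |g i|)) - ((∑ i, |g i| : ℝ) : ℂ) • 1 := by
        rw [cg_add, cg_const hUA, map_add, _root_.map_smul, hunital, add_sub_cancel_right]
      rw [h2]
      exact hpsd.1.sub (smul_one_herm _)
    have hB : (Φ A).IsHermitian := by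
      have := phiHerm lamA
      rwa [← hAcg] at this
    set UB : Matrix (Fin n) (Fin n) ℂ := (hB.eigenvectorUnitary : Matrix (Fin n) (Fin n) ℂ) with hUBdef
    have hUB : UB ∈ Matrix.unitaryGroup (Fin n) ℂ := hB.eigenvectorUnitary.2
    set lamB := hB.eigenvalues with hlamBdef
    have hBcg : Φ A = cg UB lamB := spectral hB
    -- spectrum bounds for Φ A
    obtain ⟨ia, -, hia⟩ := Finset.exists_mem_eq_inf' (Finset.univ_nonempty (α := Fin m)) lamA
    obtain ⟨ib, -, hib⟩ := Finset.exists_mem_eq_sup' (Finset.univ_nonempty (α := Fin m)) lamA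
    have hub : ∀ i, lamB i ≤ lamA ib := by
      intro i
      have h1 : ((lamA ib : ℝ) : ℂ) • 1 - Φ A = Φ (cg UA ((fun _ => lamA ib) - lamA)) := by
        rw [cg_sub, cg_const hUA, ← hAcg, map_sub, _root_.map_smul, hunital]
      have h2 : (((lamA ib : ℝ) : ℂ) • 1 - cg UB lamB).PosSemidef := by
        rw [← hBcg, h1]
        refine hpos _ (cg_psd UA fun j => ?_)
        have h3 : lamA j ≤ lamA ib := hib ▸ Finset.le_sup' lamA (Finset.mem_univ j)
        simp only [Pi.sub_apply]
        linarith
      exact eig_le_of_psd hUB h2 i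
    have hlb : ∀ i, lamA ia ≤ lamB i := by
      intro i
      have h1 : Φ A - ((lamA ia : ℝ) : ℂ) • 1 = Φ (cg UA (lamA - fun _ => lamA ia)) := by
        rw [cg_sub, cg_const hUA, ← hAcg, map_sub, _root_.map_smul, hunital]
      have h2 : (cg UB lamB - ((lamA ia : ℝ) : ℂ) • 1).PosSemidef := by
        rw [← hBcg, h1]
        refine hpos _ (cg_psd UA fun j => ?_)
        have h3 : lamA ia ≤ lamA j := hia ▸ Finset.inf'_le lamA (Finset.mem_univ j)
        simp only [Pi.sub_apply]
        linarith
      exact le_eig_of_psd hUB h2 i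
    have hBI : ∀ i, lamB i ∈ I := fun i =>
      hI.ordConnected.out (hspec ia) (hspec ib) ⟨hlb i, hub i⟩
    -- the two cfc matrices
    set X := hB.cfc f with hXdef
    have hX : X.IsHermitian := by
      rw [hXdef, cfc_eq_cg hB f]
      exact cg_isHermitian _ _
    set UX : Matrix (Fin n) (Fin n) ℂ := (hX.eigenvectorUnitary : Matrix (Fin n) (Fin n) ℂ) with hUXdef
    have hUX : UX ∈ Matrix.unitaryGroup (Fin n) ℂ := hX.eigenvectorUnitary.2
    set lamX := hX.eigenvalues with hlamXdef
    set Y := Φ (hA.cfc f) with hYdef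
    have hY : Y.IsHermitian := by
      have := phiHerm (f ∘ lamA)
      rwa [← cfc_eq_cg hA f] at this
    set UY : Matrix (Fin n) (Fin n) ℂ := (hY.eigenvectorUnitary : Matrix (Fin n) (Fin n) ℂ) with hUYdef
    have hUY : UY ∈ Matrix.unitaryGroup (Fin n) ℂ := hY.eigenvectorUnitary.2
    set lamY := hY.eigenvalues with hlamYdef
    have hYcg : Y = cg UY lamY := spectral hY
    have hXX : cg UX lamX = cg UB (f ∘ lamB) := by
      rw [← spectral hX, hXdef, cfc_eq_cg hB f]
    have hXsort : ∀ k, lamX (Tuple.sort lamX k) = (f ∘ lamB) (Tuple.sort (f ∘ lamB) k) := by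
      intro k
      refine le_antisymm ?_ ?_
      · exact weyl hUX hUB _ _ (by rw [hXX, sub_self]; exact psd_zero) k
      · exact weyl hUB hUX _ _ (by rw [← hXX, sub_self]; exact psd_zero) k
    -- the key inequality, in ascending-order form
    have main : ∀ k : Fin n, (f ∘ lamB) (Tuple.sort (f ∘ lamB) k) ≤ lamY (Tuple.sort lamY k) := by
      intro k
      set σB := Tuple.sort lamB with hσBdef
      -- set up the affine minorant at the appropriate `t0`
      have key : ∀ t0 : Fin n,
          ((f ∘ lamB) (Tuple.sort (f ∘ lamB) k) = f (lamB (σB t0))) →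
          (∀ α β : ℝ, (MonotoneOn f I → 0 ≤ α) → (AntitoneOn f I → α ≤ 0) →
            (fun i => α * lamB i + β) (Tuple.sort (fun i => α * lamB i + β) k)
              = α * lamB (σB t0) + β) →
          (f ∘ lamB) (Tuple.sort (f ∘ lamB) k) ≤ lamY (Tuple.sort lamY k) := by
        intro t0 hLHS hsel
        obtain ⟨α, β, hαm, hαa, hl1, hl2⟩ := line hconv lamA hspec (hBI (σB t0))
        have hXY : (cg UY lamY - cg UB (fun i => α * lamB i + β)).PosSemidef := by
          have e1 : cg UB (fun i => α * lamB i + β) = (α : ℂ) • Φ A + (β : ℂ) • 1 := by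
            have e0 : (fun i => α * lamB i + β) = (α • lamB) + (fun _ => β) := by
              funext i
              simp [Pi.add_apply]
            rw [e0, cg_add, cg_smul, cg_const hUB, ← hBcg]
          have e2 : cg UA (fun i => f (lamA i) - (α * lamA i + β))
              = hA.cfc f - ((α : ℂ) • A + (β : ℂ) • 1) := by
            have e0 : (fun i => f (lamA i) - (α * lamA i + β))
                = (f ∘ lamA) - ((α • lamA) + (fun _ => β)) := by
              funext i
              simp [Pi.sub_apply, Pi.add_apply]
            rw [e0, cg_sub, cg_add, cg_smul, cg_const hUA, ← hAcg, ← cfc_eq_cg hA f]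
          rw [← hYcg, hYdef, e1]
          have e3 : Φ (hA.cfc f) - ((α : ℂ) • Φ A + (β : ℂ) • 1)
              = Φ (hA.cfc f - ((α : ℂ) • A + (β : ℂ) • 1)) := by
            rw [map_sub, map_add, _root_.map_smul, _root_.map_smul, hunital]
          rw [e3, ← e2]
          refine hpos _ (cg_psd UA fun i => ?_)
          have := hl2 i
          linarith
        have hw := weyl hUB hUY (fun i => α * lamB i + β) lamY hXY k
        have hw2 : α * lamB (σB t0) + β ≤ lamY (Tuple.sort lamY k) := by
          rw [← hsel α β hαm hαa]
          exact hw
        rw [hLHS]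
        linarith
      rcases hmono with hmon | hanti
      · refine key k ?_ ?_
        · have hc : Monotone ((f ∘ lamB) ∘ σB) := by
            intro i j hij
            exact hmon (hBI _) (hBI _) (Tuple.monotone_sort lamB hij)
          exact sort_comp (w := f ∘ lamB) (σ := σB) hc k
        · intro α β hαm hαa
          have hc : Monotone ((fun i => α * lamB i + β) ∘ σB) := by
            intro i j hij
            have h1 : lamB (σB i) ≤ lamB (σB j) := Tuple.monotone_sort lamB hij
            have h2 := hαm hmon
            simp only [Function.comp_apply]
            nlinarith [mul_le_mul_of_nonneg_left h1 h2]
          exact sort_comp (w := fun i => α * lamB i + β) (σ := σB) hc k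
      · refine key k.rev ?_ ?_
        · have hc : Monotone ((f ∘ lamB) ∘ (Fin.revPerm.trans σB)) := by
            intro i j hij
            simp only [Function.comp_apply, Equiv.trans_apply, Fin.revPerm_apply]
            exact hanti (hBI _) (hBI _) (Tuple.monotone_sort lamB (Fin.rev_le_rev.mpr hij))
          exact sort_comp (w := f ∘ lamB) (σ := Fin.revPerm.trans σB) hc k
        · intro α β hαm hαa
          have hc : Monotone ((fun i => α * lamB i + β) ∘ (Fin.revPerm.trans σB)) := by
            intro i j hij
            have h1 : lamB (σB j.rev) ≤ lamB (σB i.rev) :=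
              Tuple.monotone_sort lamB (Fin.rev_le_rev.mpr hij)
            have h2 := hαa hanti
            simp only [Function.comp_apply, Equiv.trans_apply, Fin.revPerm_apply]
            nlinarith [mul_le_mul_of_nonpos_left h1 h2]
          exact sort_comp (w := fun i => α * lamB i + β) (σ := Fin.revPerm.trans σB) hc k
    -- identify `hermCFC`
    have hh1 : hermCFC (Φ A) f = X := by
      simp only [hermCFC]
      rw [dif_pos hB]

    have hh2 : hermCFC A f = hA.cfc f := by
      simp only [hermCFC]
      rw [dif_pos hA]
    have hd1 : ∀ j, eigDesc X j = lamX (Tuple.sort lamX j.rev) := by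
      intro j
      simp only [eigDesc]
      rw [dif_pos hX]
    have hd2 : ∀ j, eigDesc (Φ (hermCFC A f)) j = lamY (Tuple.sort lamY j.rev) := by
      intro j
      rw [hh2]
      show eigDesc Y j = lamY (Tuple.sort lamY j.rev)
      simp only [eigDesc]
      rw [dif_pos hY]
    have part1 : ∀ j, eigDesc (hermCFC (Φ A) f) j ≤ eigDesc (Φ (hermCFC A f)) j := by
      intro j
      rw [hh1, hd1 j, hd2 j, hXsort j.rev]
      exact main j.rev
    refine ⟨part1, ?_⟩
    set τ : Equiv.Perm (Fin n) := (Tuple.sort lamX).symm.trans (Tuple.sort lamY) with hτdef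
    refine ⟨UX * permMat τ * UYᴴ, ?_, ?_⟩
    · have h1 : UYᴴ ∈ Matrix.unitaryGroup (Fin n) ℂ := by
        rw [mem_unitaryGroup_iff, star_eq_conjTranspose, conjTranspose_conjTranspose]
        have h2 := mem_unitaryGroup_iff'.mp hUY
        rwa [star_eq_conjTranspose] at h2
      exact mul_mem (mul_mem hUX (permMat_mem τ)) h1
    · unfold loewnerLE
      rw [hh1, hh2]
      have hconj : (UX * permMat τ * UYᴴ) * Φ (hA.cfc f) * (UX * permMat τ * UYᴴ)ᴴ
          = cg UX (fun i => lamY (τ i)) := by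
        rw [← hYdef, hYcg]
        exact cg_conj hUY τ lamY
      rw [hconj]
      have hXcg2 : X = cg UX lamX := spectral hX
      rw [hXcg2, show cg UX (fun i => lamY (τ i)) - cg UX lamX
          = cg UX ((fun i => lamY (τ i)) - lamX) from (cg_sub UX _ _).symm]
      refine cg_psd UX fun i => ?_
      simp only [Pi.sub_apply]
      have h2 : lamX i ≤ lamY (Tuple.sort lamY ((Tuple.sort lamX).symm i)) := by
        calc lamX i = lamX (Tuple.sort lamX ((Tuple.sort lamX).symm i)) := by
              rw [Equiv.apply_symm_apply]
          _ = (f ∘ lamB) (Tuple.sort (f ∘ lamB) ((Tuple.sort lamX).symm i)) := hXsort _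
          _ ≤ lamY (Tuple.sort lamY ((Tuple.sort lamX).symm i)) := main _
      have h3 : τ i = Tuple.sort lamY ((Tuple.sort lamX).symm i) := by
        simp [hτdef, Equiv.trans_apply]
      rw [h3]
      linarith
end

section
/- Let A, B be n×n Hermitian matrices. Then there exist unitary matrices U and V such that |A ∘ B| ≤ (1/2)(U (|A| ∘ |B|) U* + V (|A| ∘ |B|) V*) in the Loewner order, where ∘ denotes the Hadamard (entrywise) product and |X| = (X*X)^{1/2}. -/
open Matrix
open scoped ComplexOrder Kronecker

section Aux

variable {n : ℕ}

lemma auxContOn (H : Matrix (Fin n) (Fin n) ℂ) (f : ℝ → ℝ) :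
    ContinuousOn f (spectrum ℝ H) := by
  rw [continuousOn_iff_continuous_restrict]
  fun_prop

lemma auxCfcPosSemidef {H : Matrix (Fin n) (Fin n) ℂ} (hH : H.IsHermitian)
    {f : ℝ → ℝ} (hf : ∀ x, 0 ≤ f x) : (cfc f H).PosSemidef := by
  rw [hH.cfc_eq, Matrix.IsHermitian.cfc]
  rw [Unitary.conjStarAlgAut_apply]
  rw [Matrix.star_eq_conjTranspose]
  refine Matrix.PosSemidef.mul_mul_conjTranspose_same ?_ _
  refine Matrix.PosSemidef.diagonal fun i => ?_
  simpa using Complex.zero_le_real.mpr (hf _)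

end Aux

section Aux2
variable {n : ℕ}

lemma auxCfcHermitian (H : Matrix (Fin n) (Fin n) ℂ) (f : ℝ → ℝ) :
    (cfc f H).IsHermitian :=
  (cfc_predicate f H : IsSelfAdjoint (cfc f H))

lemma matAbs_eq {H : Matrix (Fin n) (Fin n) ℂ} (hH : H.IsHermitian) :
    matAbs H = cfc (fun x : ℝ => |x|) H := by
  have habs : (cfc (fun x : ℝ => |x|) H).PosSemidef :=
    auxCfcPosSemidef hH fun x => abs_nonneg x
  have hsq : (cfc (fun x : ℝ => |x|) H) ^ 2 = Hᴴ * H := by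
    rw [pow_two, ← cfc_mul _ _ H (auxContOn H _) (auxContOn H _)]
    have h1 : (fun x : ℝ => |x| * |x|) = fun x : ℝ => x * x := by
      ext x; exact abs_mul_abs_self x
    rw [h1, cfc_mul _ _ H (auxContOn H _) (auxContOn H _),
      cfc_id' ℝ H hH.isSelfAdjoint, hH.eq]
  have h1 : matAbs H = cfc Real.sqrt (Hᴴ * H) := by
    rw [(posSemidef_conjTranspose_mul_self H).1.cfc_eq, IsHermitian.cfc,
      Unitary.conjStarAlgAut_apply]
    rfl
  have h2 : Hᴴ * H = cfc (fun x : ℝ => x * x) H := by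
    rw [cfc_mul _ _ H (auxContOn H _) (auxContOn H _), cfc_id' ℝ H hH.isSelfAdjoint, hH.eq]
  rw [h1, h2, ← cfc_comp _ _ H hH.isSelfAdjoint Real.continuous_sqrt.continuousOn
    (auxContOn H _)]
  exact cfc_congr fun x _ => Real.sqrt_mul_self_eq_abs x

lemma auxHadamardPosSemidef {M N : Matrix (Fin n) (Fin n) ℂ}
    (hM : M.PosSemidef) (hN : N.PosSemidef) : (M ⊙ N).PosSemidef := by
  exact hM.hadamard hN

lemma auxHadamardHermitian {X Y : Matrix (Fin n) (Fin n) ℂ}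
    (hX : X.IsHermitian) (hY : Y.IsHermitian) : (X ⊙ Y).IsHermitian := by
  ext i j
  simp only [Matrix.conjTranspose_apply, Matrix.hadamard_apply, star_mul']
  rw [mul_comm, hX.apply, hY.apply, mul_comm]

lemma auxHalfPosSemidef {D : Matrix (Fin n) (Fin n) ℂ}
    (hHerm : D.IsHermitian) (h : (D + D).PosSemidef) : D.PosSemidef := by
  have h0 : (0:ℂ) ≤ (2:ℂ)⁻¹ := by
    rw [show ((2:ℂ)⁻¹) = ((2⁻¹ : ℝ) : ℂ) by norm_num]
    exact Complex.zero_le_real.mpr (by norm_num)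
  have key : D = (2:ℂ)⁻¹ • (D + D) := by
    rw [← two_smul ℂ D, smul_smul, inv_mul_cancel₀ two_ne_zero, one_smul]
  rw [key]
  exact h.smul h0

end Aux2

section Main
variable {n : ℕ}

theorem stmt9aux (A B : Matrix (Fin n) (Fin n) ℂ)
    (hA : A.IsHermitian) (hB : B.IsHermitian) :
    ∃ U V : Matrix (Fin n) (Fin n) ℂ,
      U ∈ Matrix.unitaryGroup (Fin n) ℂ ∧ V ∈ Matrix.unitaryGroup (Fin n) ℂ ∧
      (((2 : ℂ)⁻¹ • (U * (matAbs A ⊙ matAbs B) * Uᴴ + V * (matAbs A ⊙ matAbs B) * Vᴴ))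
        - matAbs (A ⊙ B)).PosSemidef := by
  classical
  set C : Matrix (Fin n) (Fin n) ℂ := A ⊙ B with hCdef
  set M : Matrix (Fin n) (Fin n) ℂ := matAbs A ⊙ matAbs B with hMdef
  have hC : C.IsHermitian := auxHadamardHermitian hA hB
  set p : ℝ → ℝ := fun x => if 0 ≤ x then 1 else 0 with hp
  set P : Matrix (Fin n) (Fin n) ℂ := cfc p C with hPdef
  set S : Matrix (Fin n) (Fin n) ℂ := cfc (fun x => 2 * p x - 1) C with hSdef
  -- basic facts about P and S
  have hPpsd : P.PosSemidef := auxCfcPosSemidef hC fun x => by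
    by_cases h : 0 ≤ x <;> simp [hp, h]
  have hPH : Pᴴ = P := hPpsd.isHermitian
  have hSH : Sᴴ = S := auxCfcHermitian C _
  have hSP : S = P + P - 1 := by
    rw [hSdef, show (fun x => 2 * p x - 1) = fun x => (p x + p x) - (fun _ : ℝ => 1) x by
      ext x; ring]
    rw [cfc_sub _ _ C (by
        rw [continuousOn_iff_continuous_restrict]; fun_prop) (auxContOn C _),
      cfc_add C _ _ (auxContOn C _) (auxContOn C _), cfc_const_one ℝ C]
  have hSunit : S ∈ Matrix.unitaryGroup (Fin n) ℂ := by
    rw [Matrix.mem_unitaryGroup_iff, Matrix.star_eq_conjTranspose, hSH, hSdef,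
      ← cfc_mul _ _ C (auxContOn C _) (auxContOn C _)]
    have : (fun x => (2 * p x - 1) * (2 * p x - 1)) = fun _ : ℝ => 1 := by
      ext x; by_cases h : 0 ≤ x <;> simp [hp, h] <;> ring
    rw [this, cfc_const_one ℝ C]
  -- |C| = P*C + C*P - C
  have hPC : cfc (fun x : ℝ => p x * x) C = P * C := by
    rw [cfc_mul _ _ C (auxContOn C _) (auxContOn C _), cfc_id' ℝ C hC.isSelfAdjoint]
  have hCP : cfc (fun x : ℝ => x * p x) C = C * P := by
    rw [cfc_mul _ _ C (auxContOn C _) (auxContOn C _), cfc_id' ℝ C hC.isSelfAdjoint]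
  have habsC : matAbs C = P * C + C * P - C := by
    rw [matAbs_eq hC,
      cfc_congr (g := fun x : ℝ => (p x * x + x * p x) - x) (fun x _ => by
        by_cases h : 0 ≤ x
        · simp [hp, h, abs_of_nonneg h]
        · simp [hp, h, abs_of_neg (lt_of_not_ge h)]),
      cfc_sub _ _ C (auxContOn C _) (auxContOn C _),
      cfc_add C _ _ (auxContOn C _) (auxContOn C _), hPC, hCP,
      cfc_id' ℝ C hC.isSelfAdjoint]
  -- positivity of M ± C
  have hAp : (matAbs A + A).PosSemidef := by
    have h1 : matAbs A + A = cfc (fun x : ℝ => |x| + x) A := by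
      rw [cfc_add A _ _ (auxContOn A _) (auxContOn A _),
        cfc_id' ℝ A hA.isSelfAdjoint, matAbs_eq hA]
    rw [h1]
    exact auxCfcPosSemidef hA fun x => by linarith [neg_abs_le x]
  have hAm : (matAbs A - A).PosSemidef := by
    have h1 : matAbs A - A = cfc (fun x : ℝ => |x| - x) A := by
      rw [cfc_sub _ _ A (auxContOn A _) (auxContOn A _),
        cfc_id' ℝ A hA.isSelfAdjoint, matAbs_eq hA]
    rw [h1]
    exact auxCfcPosSemidef hA fun x => by simpa using le_abs_self x
  have hBp : (matAbs B + B).PosSemidef := by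
    have h1 : matAbs B + B = cfc (fun x : ℝ => |x| + x) B := by
      rw [cfc_add B _ _ (auxContOn B _) (auxContOn B _),
        cfc_id' ℝ B hB.isSelfAdjoint, matAbs_eq hB]
    rw [h1]
    exact auxCfcPosSemidef hB fun x => by linarith [neg_abs_le x]
  have hBm : (matAbs B - B).PosSemidef := by
    have h1 : matAbs B - B = cfc (fun x : ℝ => |x| - x) B := by
      rw [cfc_sub _ _ B (auxContOn B _) (auxContOn B _),
        cfc_id' ℝ B hB.isSelfAdjoint, matAbs_eq hB]
    rw [h1]
    exact auxCfcPosSemidef hB fun x => by simpa using le_abs_self x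
  have hMherm : M.IsHermitian :=
    auxHadamardHermitian (matAbs_eq hA ▸ auxCfcHermitian A _)
      (matAbs_eq hB ▸ auxCfcHermitian B _)
  have hMCm : (M - C).PosSemidef := by
    refine auxHalfPosSemidef (hMherm.sub hC) ?_
    have heq : (M - C) + (M - C)
        = (matAbs A - A) ⊙ (matAbs B + B) + (matAbs A + A) ⊙ (matAbs B - B) := by
      ext i j
      simp only [Matrix.add_apply, Matrix.sub_apply, Matrix.hadamard_apply, hMdef, hCdef]
      ring
    rw [heq]
    exact (auxHadamardPosSemidef hAm hBp).add (auxHadamardPosSemidef hAp hBm)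
  have hMCp : (M + C).PosSemidef := by
    refine auxHalfPosSemidef (hMherm.add hC) ?_
    have heq : (M + C) + (M + C)
        = (matAbs A + A) ⊙ (matAbs B + B) + (matAbs A - A) ⊙ (matAbs B - B) := by
      ext i j
      simp only [Matrix.add_apply, Matrix.sub_apply, Matrix.hadamard_apply, hMdef, hCdef]
      ring
    rw [heq]
    exact (auxHadamardPosSemidef hAp hBp).add (auxHadamardPosSemidef hAm hBm)
  -- the two unitaries
  refine ⟨1, S, Submonoid.one_mem _, hSunit, ?_⟩
  have key : (2 : ℂ)⁻¹ • (1 * M * (1 : Matrix (Fin n) (Fin n) ℂ)ᴴ + S * M * Sᴴ) - matAbs C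
      = P * (M - C) * Pᴴ + (1 - P) * (M + C) * (1 - P)ᴴ := by
    rw [Matrix.conjTranspose_one, hSH, hPH, Matrix.conjTranspose_sub,
      Matrix.conjTranspose_one, hPH, habsC, hSP]
    have h2 : (1 : Matrix (Fin n) (Fin n) ℂ) * M * 1 + (P + P - 1) * M * (P + P - 1)
          - (2 : ℂ) • (P * C + C * P - C)
        = (2 : ℂ) • (P * (M - C) * P + (1 - P) * (M + C) * (1 - P)) := by
      rw [two_smul, two_smul]
      noncomm_ring
    calc (2 : ℂ)⁻¹ • ((1 : Matrix (Fin n) (Fin n) ℂ) * M * 1 + (P + P - 1) * M * (P + P - 1))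
          - (P * C + C * P - C)
        = (2 : ℂ)⁻¹ • (((1 : Matrix (Fin n) (Fin n) ℂ) * M * 1 + (P + P - 1) * M * (P + P - 1))
          - (2 : ℂ) • (P * C + C * P - C)) := by
          rw [smul_sub, smul_smul, inv_mul_cancel₀ two_ne_zero, one_smul]
      _ = (2 : ℂ)⁻¹ • ((2 : ℂ) • (P * (M - C) * P + (1 - P) * (M + C) * (1 - P))) := by rw [h2]
      _ = P * (M - C) * P + (1 - P) * (M + C) * (1 - P) := by
          rw [smul_smul, inv_mul_cancel₀ two_ne_zero, one_smul]
  rw [key]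
  exact (hMCm.mul_mul_conjTranspose_same P).add (hMCp.mul_mul_conjTranspose_same (1 - P))
end Main

/-- For Hermitian `A, B` there are unitaries `U, V` with
`|A ∘ B| ≤ (1/2)(U (|A| ∘ |B|) U* + V (|A| ∘ |B|) V*)` in the Loewner order,
where `∘` is the Hadamard product. -/
theorem stmt9 {n : ℕ} (A B : Matrix (Fin n) (Fin n) ℂ)
    (hA : A.IsHermitian) (hB : B.IsHermitian) :
    ∃ U V : Matrix (Fin n) (Fin n) ℂ,
      U ∈ Matrix.unitaryGroup (Fin n) ℂ ∧ V ∈ Matrix.unitaryGroup (Fin n) ℂ ∧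
      loewnerLE (matAbs (A ⊙ B))
        ((2 : ℂ)⁻¹ • (U * (matAbs A ⊙ matAbs B) * Uᴴ + V * (matAbs A ⊙ matAbs B) * Vᴴ)) := by
  obtain ⟨U, V, hU, hV, h⟩ := stmt9aux A B hA hB
  exact ⟨U, V, hU, hV, h⟩
end

section
/- Let A, B be n×n positive semidefinite complex matrices. Then there exists a unitary matrix U such that |AB| ≤ U ((A² + B²)/2) U* in the Loewner order. -/
open Matrix
open scoped ComplexOrder Kronecker
open Complex

variable {m : ℕ}

lemma dotA (M N : Matrix (Fin m) (Fin m) ℂ) (c e : Fin m → ℂ) :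
    star (M *ᵥ c) ⬝ᵥ (N *ᵥ e) = star c ⬝ᵥ ((Mᴴ * N) *ᵥ e) := by
  rw [star_mulVec, dotProduct_mulVec, dotProduct_mulVec, vecMul_vecMul]

lemma dotB (M : Matrix (Fin m) (Fin m) ℂ) (c e : Fin m → ℂ) :
    star (M *ᵥ c) ⬝ᵥ e = star c ⬝ᵥ (Mᴴ *ᵥ e) := by
  rw [star_mulVec, dotProduct_mulVec]

lemma dot_self_real (y : Fin m → ℂ) :
    star y ⬝ᵥ y = ((∑ i, normSq (y i) : ℝ) : ℂ) := by
  push_cast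
  simp [dotProduct, Complex.normSq_eq_conj_mul_self]

lemma dot_diag (d : Fin m → ℂ) (c : Fin m → ℂ) :
    star c ⬝ᵥ ((diagonal d) *ᵥ c) = ∑ i, d i * ((normSq (c i) : ℝ) : ℂ) := by
  simp only [dotProduct, mulVec_diagonal, Pi.star_apply, RCLike.star_def,
    Complex.normSq_eq_conj_mul_self]
  exact Finset.sum_congr rfl fun i _ => by push_cast; ring

lemma nsq_nonneg (y : Fin m → ℂ) : (0:ℝ) ≤ ∑ i, normSq (y i) :=
  Finset.sum_nonneg fun i _ => normSq_nonneg _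
variable {m : ℕ}

lemma cs_re (p q : Fin m → ℂ) :
    (star p ⬝ᵥ q).re ≤ Real.sqrt (∑ i, normSq (p i)) * Real.sqrt (∑ i, normSq (q i)) := by
  have h1 : (star p ⬝ᵥ q).re ≤ ∑ i, ‖p i‖ * ‖q i‖ := by
    rw [dotProduct, Complex.re_sum]
    refine Finset.sum_le_sum fun i _ => ?_
    calc (star p i * q i).re ≤ ‖star p i * q i‖ := Complex.re_le_norm _
      _ = ‖p i‖ * ‖q i‖ := by
          simp [_root_.map_mul]
  refine h1.trans ?_
  have h2 : (∑ i, ‖p i‖ * ‖q i‖) ^ 2 ≤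
      (∑ i, normSq (p i)) * (∑ i, normSq (q i)) := by
    have := Finset.sum_mul_sq_le_sq_mul_sq Finset.univ (fun i => ‖p i‖)
      (fun i => ‖q i‖)
    simpa [Complex.sq_norm] using this
  have hs : ∀ y : Fin m → ℂ, (0:ℝ) ≤ ∑ i, normSq (y i) :=
    fun y => Finset.sum_nonneg fun i _ => normSq_nonneg _
  have h3 : (0:ℝ) ≤ ∑ i, ‖p i‖ * ‖q i‖ :=
    Finset.sum_nonneg fun i _ => mul_nonneg (norm_nonneg _) (norm_nonneg _)
  calc (∑ i, ‖p i‖ * ‖q i‖)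
      = Real.sqrt ((∑ i, ‖p i‖ * ‖q i‖)^2) := (Real.sqrt_sq h3).symm
    _ ≤ Real.sqrt ((∑ i, normSq (p i)) * (∑ i, normSq (q i))) := Real.sqrt_le_sqrt h2
    _ = _ := Real.sqrt_mul (hs p) _

lemma sqrt_two_term {a b c d : ℝ} (ha : 0 ≤ a) (hb : 0 ≤ b) (hc : 0 ≤ c) (hd : 0 ≤ d) :
    Real.sqrt a * Real.sqrt b + Real.sqrt c * Real.sqrt d ≤
      Real.sqrt (a + c) * Real.sqrt (b + d) := by
  have h1 : (Real.sqrt a * Real.sqrt b + Real.sqrt c * Real.sqrt d)^2 ≤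
      (Real.sqrt (a+c) * Real.sqrt (b+d))^2 := by
    rw [mul_pow (Real.sqrt (a+c)), Real.sq_sqrt (by linarith : (0:ℝ) ≤ a + c),
      Real.sq_sqrt (by linarith : (0:ℝ) ≤ b + d)]
    have key : 2 * (Real.sqrt a * Real.sqrt b * (Real.sqrt c * Real.sqrt d)) ≤ a*d + c*b := by
      nlinarith [sq_nonneg (Real.sqrt a * Real.sqrt d - Real.sqrt c * Real.sqrt b),
        Real.sq_sqrt ha, Real.sq_sqrt hb, Real.sq_sqrt hc, Real.sq_sqrt hd,
        Real.sqrt_nonneg a, Real.sqrt_nonneg b, Real.sqrt_nonneg c, Real.sqrt_nonneg d]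
    nlinarith [Real.sq_sqrt ha, Real.sq_sqrt hb, Real.sq_sqrt hc, Real.sq_sqrt hd]
  have hl : 0 ≤ Real.sqrt a * Real.sqrt b + Real.sqrt c * Real.sqrt d := by positivity
  have hr : 0 ≤ Real.sqrt (a+c) * Real.sqrt (b+d) := by positivity
  nlinarith

set_option maxHeartbeats 2000000 in
lemma key_core {n : ℕ} (A B V W : Matrix (Fin n) (Fin n) ℂ) (s t : Fin n → ℝ)
    (hA1 : Aᴴ = A) (hB1 : Bᴴ = B)
    (hV : Vᴴ * V = 1)
    (hW : Wᴴ * W = 1)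
    (hXX : Vᴴ * ((A*B)ᴴ * (A*B)) * V = diagonal (fun i => ((s i : ℝ) : ℂ)^2))
    (hSd : Wᴴ * (A*A + B*B) * W = diagonal (fun i => ((t i : ℝ) : ℂ)))
    (c τ : ℝ) (hc : 0 < c) (hτ : 0 ≤ τ)
    (I J : Finset (Fin n)) (hI : ∀ i ∈ I, c ≤ s i)
    (hJ : ∀ i ∈ J, t i ≤ τ)
    (hcard : n < I.card + J.card) :
    2 * c ≤ τ := by
  classical
  set X := A * B with hX
  set Dinv : Matrix (Fin n) (Fin n) ℂ := diagonal (fun i => (((s i)⁻¹ : ℝ) : ℂ)) with hDinv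
  set Umat : Matrix (Fin n) (Fin n) ℂ := X * V * Dinv with hUmat
  set T : (Fin n → ℂ) →ₗ[ℂ] ((Fin n → ℂ) × (Fin n → ℂ)) :=
    LinearMap.prod (Matrix.mulVecLin Umat) (Matrix.mulVecLin V) with hT
  set wfam : I → ((Fin n → ℂ) × (Fin n → ℂ)) := fun i => T (Pi.single (i : Fin n) 1) with hwfam
  set Espan : Submodule ℂ ((Fin n → ℂ) × (Fin n → ℂ)) := Submodule.span ℂ (Set.range wfam)
    with hEspan
  set Cmap : ((Fin n → ℂ) × (Fin n → ℂ)) →ₗ[ℂ] (Fin n → ℂ) :=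
    (Matrix.mulVecLin A).coprod (Matrix.mulVecLin B) with hCmap
  set yfam : J → (Fin n → ℂ) := fun j => (fun a => W a (j : Fin n)) with hyfam
  set F0 : Submodule ℂ (Fin n → ℂ) := Submodule.span ℂ (Set.range yfam) with hF0
  set F : Submodule ℂ ((Fin n → ℂ) × (Fin n → ℂ)) := F0.comap Cmap with hF
  -- unit/invertibility
  have hVunit : IsUnit V := by
    have := invertibleOfLeftInverse _ _ hV
    exact isUnit_of_invertible V
  have hWunit : IsUnit W := by
    have := invertibleOfLeftInverse _ _ hW
    exact isUnit_of_invertible W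
  -- finrank of Espan
  have hwind : LinearIndependent ℂ wfam := by
    have hcols : LinearIndependent ℂ (fun i : I => Vᵀ (i : Fin n)) :=
      (Matrix.linearIndependent_cols_iff_isUnit.mpr hVunit).comp _ Subtype.val_injective
    have : LinearIndependent ℂ (fun i : I => (LinearMap.snd ℂ (Fin n → ℂ) (Fin n → ℂ)) (wfam i)) := by
      convert hcols using 2 with i
      funext b
      simp [hwfam, hT, Matrix.mulVec_single, Matrix.transpose_apply]
    exact LinearIndependent.of_comp _ this
  have hEfinrank : Module.finrank ℂ Espan = I.card := by
    rw [hEspan, finrank_span_eq_card hwind, Fintype.card_coe]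
  -- finrank of F0
  have hyind : LinearIndependent ℂ yfam := by
    have hcols : LinearIndependent ℂ (fun j : J => Wᵀ (j : Fin n)) :=
      (Matrix.linearIndependent_cols_iff_isUnit.mpr hWunit).comp _ Subtype.val_injective
    exact hcols
  have hF0finrank : Module.finrank ℂ F0 = J.card := by
    rw [hF0, finrank_span_eq_card hyind, Fintype.card_coe]
  -- finrank of F
  have hFfinrank : n + J.card ≤ Module.finrank ℂ F := by
    set g : ((Fin n → ℂ) × (Fin n → ℂ)) →ₗ[ℂ] ((Fin n → ℂ) ⧸ F0) := F0.mkQ.comp Cmap with hg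
    have hker : LinearMap.ker g = F := by
      rw [hg, LinearMap.ker_comp, Submodule.ker_mkQ, hF]
    have h1 := LinearMap.finrank_range_add_finrank_ker g
    have h2 := Submodule.finrank_quotient_add_finrank F0
    have h3 : Module.finrank ℂ (LinearMap.range g) ≤ Module.finrank ℂ ((Fin n → ℂ) ⧸ F0) :=
      Submodule.finrank_le _
    have h4 : Module.finrank ℂ ((Fin n → ℂ) × (Fin n → ℂ)) = n + n := by
      simp [Module.finrank_prod, Module.finrank_fintype_fun_eq_card]
    have h5 : Module.finrank ℂ (Fin n → ℂ) = n := by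
      simp [Module.finrank_fintype_fun_eq_card]
    rw [hker] at h1
    rw [h5] at h2
    rw [h4] at h1
    rw [hF0finrank] at h2
    omega
  -- intersection nonzero
  have hsup : Module.finrank ℂ (Espan ⊔ F : Submodule ℂ _) ≤ n + n := by
    have := Submodule.finrank_le (Espan ⊔ F : Submodule ℂ _)
    simpa [Module.finrank_prod, Module.finrank_fintype_fun_eq_card] using this
  have hinf : 0 < Module.finrank ℂ (Espan ⊓ F : Submodule ℂ _) := by
    have := Submodule.finrank_sup_add_finrank_inf_eq Espan F
    omega
  have hne : (Espan ⊓ F : Submodule ℂ _) ≠ ⊥ := by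
    intro h
    rw [h, finrank_bot] at hinf
    exact lt_irrefl 0 hinf
  obtain ⟨x, hxmem, hxne⟩ := Submodule.exists_mem_ne_zero_of_ne_bot hne
  have hxE : x ∈ Espan := hxmem.1
  have hxF : x ∈ F := hxmem.2
  -- representation from Espan
  obtain ⟨d, hd⟩ := Submodule.mem_span_range_iff_exists_fun ℂ |>.mp hxE
  set cvec : Fin n → ℂ := ∑ i : I, d i • (Pi.single (i : Fin n) (1:ℂ) : Fin n → ℂ) with hcvec
  have hTc : T cvec = x := by
    rw [hcvec, map_sum]
    simpa [_root_.map_smul] using hd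
  have hcsupp : ∀ a, a ∉ I → cvec a = 0 := by
    intro a ha
    rw [hcvec, Finset.sum_apply]
    refine Finset.sum_eq_zero fun i _ => ?_
    have : (i : Fin n) ≠ a := fun h => ha (h ▸ i.2)
    simp [Pi.single_apply, this.symm]
  set u : Fin n → ℂ := Umat *ᵥ cvec with hu
  set v : Fin n → ℂ := V *ᵥ cvec with hv
  have hxuv : x = (u, v) := by rw [← hTc]; rfl
  clear_value u v
  set sc2 : ℝ := ∑ i, normSq (cvec i) with hsc2
  have hsc2pos : 0 < sc2 := by
    rcases lt_or_eq_of_le (nsq_nonneg cvec) with h | h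
    · exact h
    · exfalso
      have hzero : cvec = 0 := by
        funext a
        have := (Finset.sum_eq_zero_iff_of_nonneg
          (fun i _ => normSq_nonneg (cvec i))).mp h.symm a (Finset.mem_univ a)
        exact normSq_eq_zero.mp this
      apply hxne
      rw [← hTc, hzero, map_zero]
  -- (a) norm of v
  have hvv : star v ⬝ᵥ v = (sc2 : ℂ) := by
    rw [hv, dotA, hV, Matrix.one_mulVec, dot_self_real, hsc2]
  -- (b) norm of u
  have hUU : Umatᴴ * Umat =
      diagonal (fun i => (((s i)⁻¹ : ℝ) : ℂ) * ((s i : ℝ) : ℂ)^2 * (((s i)⁻¹ : ℝ) : ℂ)) := by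
    have h1 : Umatᴴ * Umat = Dinvᴴ * (Vᴴ * ((A*B)ᴴ * (A*B)) * V) * Dinv := by
      rw [hUmat]
      simp only [Matrix.conjTranspose_mul, ← hX]
      noncomm_ring
    rw [h1, hXX, hDinv, Matrix.diagonal_conjTranspose]
    rw [Matrix.diagonal_mul_diagonal, Matrix.diagonal_mul_diagonal]
    congr 1
    funext i
    simp [Complex.conj_ofReal, mul_comm, mul_assoc, mul_left_comm]
  have huu : star u ⬝ᵥ u = (sc2 : ℂ) := by
    rw [hu, dotA, hUU, dot_diag, hsc2]
    push_cast
    refine Finset.sum_congr rfl fun i _ => ?_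
    by_cases hi : i ∈ I
    · have hsi : s i ≠ 0 := ne_of_gt (lt_of_lt_of_le hc (hI i hi))
      have hsi' : ((s i : ℝ) : ℂ) ≠ 0 := Complex.ofReal_ne_zero.mpr hsi
      have h1 : ((s i:ℝ):ℂ)⁻¹ * ((s i:ℝ):ℂ) ^ 2 * ((s i:ℝ):ℂ)⁻¹ = 1 := by
        field_simp [sq]
      rw [h1, one_mul]
    · rw [hcsupp i hi]
      simp
  -- (c) cross term
  have hUXV : Umatᴴ * (X * V) = diagonal (fun i => (((s i)⁻¹ : ℝ) : ℂ) * ((s i : ℝ) : ℂ)^2) := by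
    have h1 : Umatᴴ * (X * V) = Dinvᴴ * (Vᴴ * ((A*B)ᴴ * (A*B)) * V) := by
      rw [hUmat]
      simp only [Matrix.conjTranspose_mul, ← hX]
      noncomm_ring
    rw [h1, hXX, hDinv, Matrix.diagonal_conjTranspose, Matrix.diagonal_mul_diagonal]
    congr 1
    funext i
    simp [Complex.conj_ofReal]
  have hxv : star u ⬝ᵥ (X *ᵥ v) = ((∑ i, s i * normSq (cvec i) : ℝ) : ℂ) := by
    rw [hv, Matrix.mulVec_mulVec, hu, dotA, hUXV, dot_diag]
    push_cast
    refine Finset.sum_congr rfl fun i _ => ?_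
    by_cases hi : i ∈ I
    · have hsi : s i ≠ 0 := ne_of_gt (lt_of_lt_of_le hc (hI i hi))
      have hsi' : ((s i : ℝ) : ℂ) ≠ 0 := Complex.ofReal_ne_zero.mpr hsi
      have h1 : ((s i:ℝ):ℂ)⁻¹ * ((s i:ℝ):ℂ) ^ 2 = ((s i:ℝ):ℂ) := by
        field_simp [sq]
      rw [h1]
    · rw [hcsupp i hi]
      simp
  -- (d) the F side
  have hwF0 : Cmap x ∈ F0 := hxF
  set wv : Fin n → ℂ := A *ᵥ u + B *ᵥ v with hwv
  have hCx : Cmap x = wv := by rw [hxuv]; rfl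
  rw [hCx] at hwF0
  clear_value wv
  obtain ⟨dd, hdd⟩ := Submodule.mem_span_range_iff_exists_fun ℂ |>.mp hwF0
  set dvec : Fin n → ℂ := ∑ j : J, dd j • (Pi.single (j : Fin n) (1:ℂ) : Fin n → ℂ) with hdvec
  have hdsupp : ∀ a, a ∉ J → dvec a = 0 := by
    intro a ha
    rw [hdvec, Finset.sum_apply]
    refine Finset.sum_eq_zero fun j _ => ?_
    have : (j : Fin n) ≠ a := fun h => ha (h ▸ j.2)
    simp [Pi.single_apply, this.symm]
  have hWd : W *ᵥ dvec = wv := by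
    rw [hdvec, ← hdd]
    rw [show (W *ᵥ ∑ j : J, dd j • (Pi.single (j : Fin n) (1:ℂ) : Fin n → ℂ))
        = W.mulVecLin (∑ j : J, dd j • (Pi.single (j : Fin n) (1:ℂ) : Fin n → ℂ)) from rfl]
    rw [map_sum]
    refine Finset.sum_congr rfl fun j _ => ?_
    rw [_root_.map_smul]
    congr 1
    funext a
    simp [Matrix.mulVecLin_apply, Matrix.mulVec_single, hyfam]
  set sd2 : ℝ := ∑ i, normSq (dvec i) with hsd2
  have hww : star wv ⬝ᵥ wv = (sd2 : ℂ) := by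
    rw [← hWd, dotA, hW, Matrix.one_mulVec, dot_self_real, hsd2]
  have hSw : star wv ⬝ᵥ ((A*A + B*B) *ᵥ wv) = ((∑ i, t i * normSq (dvec i) : ℝ) : ℂ) := by
    have h1 : (A*A + B*B) *ᵥ wv = ((A*A + B*B) * W) *ᵥ dvec := by
      rw [← hWd, Matrix.mulVec_mulVec]
    rw [h1, ← hWd, dotA]
    have h2 : Wᴴ * ((A*A + B*B) * W) = diagonal (fun i => ((t i : ℝ) : ℂ)) := by
      rw [← Matrix.mul_assoc, hSd]
    rw [h2, dot_diag]
    push_cast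
    rfl
  have htb : (∑ i, t i * normSq (dvec i)) ≤ τ * sd2 := by
    rw [hsd2, Finset.mul_sum]
    refine Finset.sum_le_sum fun i _ => ?_
    by_cases hi : i ∈ J
    · exact mul_le_mul_of_nonneg_right (hJ i hi) (normSq_nonneg _)
    · rw [hdsupp i hi]
      simp
  -- (e) the chain
  have hab : star (A *ᵥ u) ⬝ᵥ (B *ᵥ v) = star u ⬝ᵥ (X *ᵥ v) := by
    rw [hX, dotA, hA1]
  have h4re : 4 * (∑ i, s i * normSq (cvec i)) ≤ re (star wv ⬝ᵥ wv) := by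
    have hminus : (0:ℝ) ≤ re (star ((A *ᵥ u) - (B *ᵥ v)) ⬝ᵥ ((A *ᵥ u) - (B *ᵥ v))) := by
      rw [dot_self_real]
      simpa using nsq_nonneg ((A *ᵥ u) - (B *ᵥ v))
    have hexp1 : star ((A *ᵥ u) - (B *ᵥ v)) ⬝ᵥ ((A *ᵥ u) - (B *ᵥ v))
        = star (A *ᵥ u) ⬝ᵥ (A *ᵥ u) - star (A *ᵥ u) ⬝ᵥ (B *ᵥ v)
          - star (B *ᵥ v) ⬝ᵥ (A *ᵥ u) + star (B *ᵥ v) ⬝ᵥ (B *ᵥ v) := by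
      simp only [star_sub, sub_dotProduct, dotProduct_sub]
      try ring
    have hexp2 : star wv ⬝ᵥ wv
        = star (A *ᵥ u) ⬝ᵥ (A *ᵥ u) + star (A *ᵥ u) ⬝ᵥ (B *ᵥ v)
          + star (B *ᵥ v) ⬝ᵥ (A *ᵥ u) + star (B *ᵥ v) ⬝ᵥ (B *ᵥ v) := by
      rw [hwv]
      simp only [star_add, add_dotProduct, dotProduct_add]
      try ring
    have hba : re (star (B *ᵥ v) ⬝ᵥ (A *ᵥ u)) = re (star (A *ᵥ u) ⬝ᵥ (B *ᵥ v)) := by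
      have h9 : star (B *ᵥ v) ⬝ᵥ (A *ᵥ u) = star (star (A *ᵥ u) ⬝ᵥ (B *ᵥ v)) := by
        rw [star_dotProduct]
        try simp
      rw [h9]
      exact Complex.conj_re _
    have habre : re (star (A *ᵥ u) ⬝ᵥ (B *ᵥ v)) = ∑ i, s i * normSq (cvec i) := by
      rw [hab, hxv, Complex.ofReal_re]
    rw [hexp1] at hminus
    rw [hexp2]
    simp only [Complex.sub_re, Complex.add_re] at *
    linarith
  have hclow : c * sc2 ≤ ∑ i, s i * normSq (cvec i) := by
    rw [hsc2, Finset.mul_sum]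
    refine Finset.sum_le_sum fun i _ => ?_
    by_cases hi : i ∈ I
    · exact mul_le_mul_of_nonneg_right (hI i hi) (normSq_nonneg _)
    · rw [hcsupp i hi]
      simp
  -- Cauchy-Schwarz side
  have hcs : re (star wv ⬝ᵥ wv) ≤ Real.sqrt (sc2 + sc2) * Real.sqrt (τ * sd2) := by
    have hsplit : star wv ⬝ᵥ wv = star u ⬝ᵥ (A *ᵥ wv) + star v ⬝ᵥ (B *ᵥ wv) := by
      have e1 : star (A *ᵥ u) ⬝ᵥ wv = star u ⬝ᵥ (A *ᵥ wv) := by rw [dotB, hA1]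
      have e2 : star (B *ᵥ v) ⬝ᵥ wv = star v ⬝ᵥ (B *ᵥ wv) := by rw [dotB, hB1]
      nth_rewrite 1 [hwv]
      rw [star_add, add_dotProduct, e1, e2]
    have hAw : re (star u ⬝ᵥ (A *ᵥ wv)) ≤
        Real.sqrt sc2 * Real.sqrt (∑ i, normSq ((A *ᵥ wv) i)) := by
      have := cs_re u (A *ᵥ wv)
      rwa [show (∑ i, normSq (u i)) = sc2 from by
        have := huu; rw [dot_self_real] at this
        exact_mod_cast this] at this
    have hBw : re (star v ⬝ᵥ (B *ᵥ wv)) ≤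
        Real.sqrt sc2 * Real.sqrt (∑ i, normSq ((B *ᵥ wv) i)) := by
      have := cs_re v (B *ᵥ wv)
      rwa [show (∑ i, normSq (v i)) = sc2 from by
        have := hvv; rw [dot_self_real] at this
        exact_mod_cast this] at this
    have htt : Real.sqrt sc2 * Real.sqrt (∑ i, normSq ((A *ᵥ wv) i))
        + Real.sqrt sc2 * Real.sqrt (∑ i, normSq ((B *ᵥ wv) i))
        ≤ Real.sqrt (sc2 + sc2) *
          Real.sqrt ((∑ i, normSq ((A *ᵥ wv) i)) + (∑ i, normSq ((B *ᵥ wv) i))) :=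
      sqrt_two_term (le_of_lt hsc2pos) (nsq_nonneg _) (le_of_lt hsc2pos) (nsq_nonneg _)
    have hsum : (∑ i, normSq ((A *ᵥ wv) i)) + (∑ i, normSq ((B *ᵥ wv) i))
        = ∑ i, t i * normSq (dvec i) := by
      have e1 : ((∑ i, normSq ((A *ᵥ wv) i) : ℝ) : ℂ) = star (A *ᵥ wv) ⬝ᵥ (A *ᵥ wv) :=
        (dot_self_real _).symm
      have e2 : ((∑ i, normSq ((B *ᵥ wv) i) : ℝ) : ℂ) = star (B *ᵥ wv) ⬝ᵥ (B *ᵥ wv) :=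
        (dot_self_real _).symm
      have e3 : star (A *ᵥ wv) ⬝ᵥ (A *ᵥ wv) + star (B *ᵥ wv) ⬝ᵥ (B *ᵥ wv)
          = star wv ⬝ᵥ ((A*A + B*B) *ᵥ wv) := by
        rw [dotA, dotA, hA1, hB1, Matrix.add_mulVec, dotProduct_add]
      have := e3
      rw [← e1, ← e2, hSw] at this
      exact_mod_cast this
    have hmon : Real.sqrt ((∑ i, normSq ((A *ᵥ wv) i)) + (∑ i, normSq ((B *ᵥ wv) i)))
        ≤ Real.sqrt (τ * sd2) := by
      apply Real.sqrt_le_sqrt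
      rw [hsum]
      exact htb
    calc re (star wv ⬝ᵥ wv) = re (star u ⬝ᵥ (A *ᵥ wv)) + re (star v ⬝ᵥ (B *ᵥ wv)) := by
          rw [hsplit, Complex.add_re]
      _ ≤ _ := add_le_add hAw hBw
      _ ≤ _ := htt
      _ ≤ Real.sqrt (sc2 + sc2) * Real.sqrt (τ * sd2) := by
          apply mul_le_mul_of_nonneg_left hmon (Real.sqrt_nonneg _)
  -- final combination
  have hnw : re (star wv ⬝ᵥ wv) = sd2 := by rw [hww, Complex.ofReal_re]
  have hsd2nn : 0 ≤ sd2 := by rw [hsd2]; exact nsq_nonneg _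
  have hlow : 4 * (c * sc2) ≤ sd2 := by
    rw [← hnw]
    calc 4 * (c * sc2) ≤ 4 * (∑ i, s i * normSq (cvec i)) := by linarith
      _ ≤ _ := h4re
  have hsd2pos : 0 < sd2 := by
    have h0 : (0:ℝ) < 4 * (c * sc2) := by positivity
    linarith
  have hsq : sd2 * sd2 ≤ (sc2 + sc2) * (τ * sd2) := by
    have h1 : sd2 ≤ Real.sqrt (sc2 + sc2) * Real.sqrt (τ * sd2) := by
      have h1' := hcs; rw [hnw] at h1'; exact h1'
    have h2 : (Real.sqrt (sc2 + sc2) * Real.sqrt (τ * sd2))^2 = (sc2 + sc2) * (τ * sd2) := by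
      rw [mul_pow, Real.sq_sqrt (by linarith), Real.sq_sqrt (mul_nonneg hτ hsd2nn)]
    nlinarith [Real.sqrt_nonneg (sc2 + sc2), Real.sqrt_nonneg (τ * sd2)]
  have hfin : sd2 ≤ 2 * sc2 * τ := by nlinarith [hsq, hsd2pos]
  nlinarith [hlow, hfin, hsc2pos, mul_pos hsc2pos hc]

lemma conj_perm {n : ℕ} (M W : Matrix (Fin n) (Fin n) ℂ) (φ : Equiv.Perm (Fin n)) :
    (W.submatrix id ⇑φ)ᴴ * M * (W.submatrix id ⇑φ) = (Wᴴ * M * W).submatrix ⇑φ ⇑φ := by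
  ext i k
  simp [Matrix.mul_apply, Matrix.conjTranspose_apply, Matrix.submatrix_apply]

lemma perm_self {n : ℕ} (W : Matrix (Fin n) (Fin n) ℂ) (φ : Equiv.Perm (Fin n)) :
    (W.submatrix id ⇑φ) * (W.submatrix id ⇑φ)ᴴ = W * Wᴴ := by
  ext a b
  simp only [Matrix.mul_apply, Matrix.conjTranspose_apply, Matrix.submatrix_apply, id_eq]
  exact Equiv.sum_comp φ (fun k => W a k * star (W b k))

lemma diag_perm {n : ℕ} (d : Fin n → ℂ) (φ : Equiv.Perm (Fin n)) :
    (Matrix.diagonal d).submatrix ⇑φ ⇑φ = Matrix.diagonal (d ∘ ⇑φ) := by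
  ext i k
  by_cases h : i = k
  · subst h; simp
  · rw [Matrix.submatrix_apply, Matrix.diagonal_apply_ne _ (fun hc => h (φ.injective hc)),
      Matrix.diagonal_apply_ne _ h]

lemma one_perm {n : ℕ} (φ : Equiv.Perm (Fin n)) :
    (1 : Matrix (Fin n) (Fin n) ℂ).submatrix ⇑φ ⇑φ = 1 := by
  have := diag_perm (fun _ => (1:ℂ)) φ
  simpa [Matrix.diagonal_one] using this

-- counting lemma
lemma card_ge_of_sorted {n : ℕ} (s : Fin n → ℝ) (j : Fin n) :
    n - j.val ≤ (Finset.univ.filter (fun i => s (Tuple.sort s j) ≤ s i)).card := by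
  classical
  have hmono := Tuple.monotone_sort s
  have hsub : (Finset.Ici j).image (Tuple.sort s) ⊆
      Finset.univ.filter (fun i => s (Tuple.sort s j) ≤ s i) := by
    intro i hi
    simp only [Finset.mem_image, Finset.mem_Ici] at hi
    obtain ⟨j', hj', rfl⟩ := hi
    simp only [Finset.mem_filter, Finset.mem_univ, true_and]
    exact hmono hj'
  calc n - j.val = (Finset.Ici j).card := by rw [Fin.card_Ici]
    _ = ((Finset.Ici j).image (Tuple.sort s)).card :=
        (Finset.card_image_of_injective _ (Tuple.sort s).injective).symm
    _ ≤ _ := Finset.card_le_card hsub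

lemma card_le_of_sorted {n : ℕ} (t : Fin n → ℝ) (j : Fin n) :
    j.val + 1 ≤ (Finset.univ.filter (fun i => t i ≤ t (Tuple.sort t j))).card := by
  classical
  have hmono := Tuple.monotone_sort t
  have hsub : (Finset.Iic j).image (Tuple.sort t) ⊆
      Finset.univ.filter (fun i => t i ≤ t (Tuple.sort t j)) := by
    intro i hi
    simp only [Finset.mem_image, Finset.mem_Iic] at hi
    obtain ⟨j', hj', rfl⟩ := hi
    simp only [Finset.mem_filter, Finset.mem_univ, true_and]
    exact hmono hj'
  calc j.val + 1 = (Finset.Iic j).card := by rw [Fin.card_Iic]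
    _ = ((Finset.Iic j).image (Tuple.sort t)).card :=
        (Finset.card_image_of_injective _ (Tuple.sort t).injective).symm
    _ ≤ _ := Finset.card_le_card hsub


lemma matAbs_posSemidef {n : ℕ} (X : Matrix (Fin n) (Fin n) ℂ) : (matAbs X).PosSemidef := by
  unfold matAbs
  exact (Matrix.PosSemidef.diagonal (fun i => Complex.zero_le_real.mpr (Real.sqrt_nonneg _))).mul_mul_conjTranspose_same _

lemma matAbs_mul_self {n : ℕ} (X : Matrix (Fin n) (Fin n) ℂ) : matAbs X * matAbs X = Xᴴ * X := by
  set h := (Matrix.posSemidef_conjTranspose_mul_self X) with hh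
  set U : Matrix (Fin n) (Fin n) ℂ := (h.1.eigenvectorUnitary : Matrix (Fin n) (Fin n) ℂ) with hU
  have hUU : star U * U = 1 := Unitary.coe_star_mul_self _
  have hsp : Xᴴ * X = U * diagonal (RCLike.ofReal ∘ h.1.eigenvalues) * star U := by
    have := h.1.spectral_theorem
    rw [Unitary.conjStarAlgAut_apply] at this
    exact this
  have hD : diagonal (((↑) ∘ (√·) ∘ h.1.eigenvalues : Fin n → ℂ)) *
      diagonal (((↑) ∘ (√·) ∘ h.1.eigenvalues : Fin n → ℂ)) =
      diagonal (RCLike.ofReal ∘ h.1.eigenvalues) := by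
    rw [diagonal_mul_diagonal]
    congr 1
    funext i
    simp only [Function.comp_apply]
    rw [← Complex.ofReal_mul, Real.mul_self_sqrt (h.eigenvalues_nonneg i)]
    rfl
  have hm : matAbs X = U * diagonal (((↑) ∘ (√·) ∘ h.1.eigenvalues : Fin n → ℂ)) * star U := rfl
  refine Eq.trans ?_ hsp.symm
  rw [hm, ← hD]
  simp only [Matrix.mul_assoc]
  rw [← Matrix.mul_assoc (star U) U, hUU, Matrix.one_mul]

lemma sandwich_sq {n : ℕ} (V M : Matrix (Fin n) (Fin n) ℂ) (hVV : V * Vᴴ = 1) :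
    Vᴴ * (M * M) * V = (Vᴴ * M * V) * (Vᴴ * M * V) := by
  have h1 : (Vᴴ * M * V) * (Vᴴ * M * V) = Vᴴ * M * (V * Vᴴ) * (M * V) := by
    noncomm_ring
  rw [h1, hVV, Matrix.mul_one]
  noncomm_ring

lemma key_sorted {n : ℕ} {A B : Matrix (Fin n) (Fin n) ℂ}
    (hA : A.PosSemidef) (hB : B.PosSemidef)
    (hG : (matAbs (A*B)).PosSemidef) (hS : (A^2 + B^2).PosSemidef) (j : Fin n) :
    2 * hG.1.eigenvalues (Tuple.sort hG.1.eigenvalues j)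
      ≤ hS.1.eigenvalues (Tuple.sort hS.1.eigenvalues j) := by
  classical
  set s : Fin n → ℝ := hG.1.eigenvalues with hs
  set t : Fin n → ℝ := hS.1.eigenvalues with ht
  have hτnn : 0 ≤ t (Tuple.sort t j) := hS.eigenvalues_nonneg _
  by_cases hc : 0 < s (Tuple.sort s j)
  swap
  · push_neg at hc
    linarith
  -- setup for key_core
  set V : Matrix (Fin n) (Fin n) ℂ := (hG.1.eigenvectorUnitary : Matrix (Fin n) (Fin n) ℂ)
    with hVdef
  set W : Matrix (Fin n) (Fin n) ℂ := (hS.1.eigenvectorUnitary : Matrix (Fin n) (Fin n) ℂ)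
    with hWdef
  have hVmem := hG.1.eigenvectorUnitary.2
  have hWmem := hS.1.eigenvectorUnitary.2
  rw [Unitary.mem_iff] at hVmem hWmem
  have hV : Vᴴ * V = 1 := by
    rw [← Matrix.star_eq_conjTranspose]; exact hVmem.1
  have hVV : V * Vᴴ = 1 := by
    rw [← Matrix.star_eq_conjTranspose]; exact hVmem.2
  have hW : Wᴴ * W = 1 := by
    rw [← Matrix.star_eq_conjTranspose]; exact hWmem.1
  have hGdiag : Vᴴ * (matAbs (A*B)) * V = Matrix.diagonal (RCLike.ofReal ∘ s) := by
    rw [← Matrix.star_eq_conjTranspose]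
    have := hG.1.conjStarAlgAut_star_eigenvectorUnitary
    rw [Unitary.conjStarAlgAut_star_apply] at this
    exact this
  have hSdiag : Wᴴ * (A^2 + B^2) * W = Matrix.diagonal (RCLike.ofReal ∘ t) := by
    rw [← Matrix.star_eq_conjTranspose]
    have := hS.1.conjStarAlgAut_star_eigenvectorUnitary
    rw [Unitary.conjStarAlgAut_star_apply] at this
    exact this
  have hGG : (matAbs (A*B)) * (matAbs (A*B)) = (A*B)ᴴ * (A*B) :=
    matAbs_mul_self (A*B)
  have hXX : Vᴴ * ((A*B)ᴴ * (A*B)) * V = Matrix.diagonal (fun i => ((s i : ℝ) : ℂ)^2) := by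
    rw [← hGG]
    calc Vᴴ * (matAbs (A*B) * matAbs (A*B)) * V
        = (Vᴴ * (matAbs (A*B)) * V) * (Vᴴ * (matAbs (A*B)) * V) :=
          sandwich_sq V (matAbs (A*B)) hVV
      _ = Matrix.diagonal (fun i => ((s i : ℝ) : ℂ)^2) := by
          rw [hGdiag, Matrix.diagonal_mul_diagonal]
          congr 1
          funext i
          simp [sq]
  have hSd : Wᴴ * (A*A + B*B) * W = Matrix.diagonal (fun i => ((t i : ℝ) : ℂ)) := by
    have h2 : A*A + B*B = A^2 + B^2 := by rw [pow_two, pow_two]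
    rw [h2, hSdiag]
    rfl
  -- counting
  set I : Finset (Fin n) := Finset.univ.filter (fun i => s (Tuple.sort s j) ≤ s i) with hI
  set J : Finset (Fin n) := Finset.univ.filter (fun i => t i ≤ t (Tuple.sort t j)) with hJ
  have hIcard : n - j.val ≤ I.card := card_ge_of_sorted s j
  have hJcard : j.val + 1 ≤ J.card := card_le_of_sorted t j
  have hcard : n < I.card + J.card := by
    have := j.isLt
    omega
  exact key_core A B V W s t hA.1 hB.1 hV hW hXX hSd
    (s (Tuple.sort s j)) (t (Tuple.sort t j)) hc hτnn I J
    (fun i hi => (Finset.mem_filter.mp hi).2)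
    (fun i hi => (Finset.mem_filter.mp hi).2) hcard

/-- Bhatia–Kittaneh: for positive semidefinite `A, B` there is a unitary `U` with
`|AB| ≤ U ((A² + B²)/2) U*` in the Loewner order. -/
theorem stmt17 {n : ℕ} (A B : Matrix (Fin n) (Fin n) ℂ)
    (hA : A.PosSemidef) (hB : B.PosSemidef) :
    ∃ U ∈ Matrix.unitaryGroup (Fin n) ℂ,
      loewnerLE (matAbs (A * B)) ((2 : ℂ)⁻¹ • (U * (A ^ 2 + B ^ 2) * Uᴴ)) := by
  classical
  have hG : (matAbs (A * B)).PosSemidef :=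
    matAbs_posSemidef (A*B)
  have hS : (A ^ 2 + B ^ 2).PosSemidef := (hA.pow 2).add (hB.pow 2)
  set s : Fin n → ℝ := hG.1.eigenvalues with hs
  set t : Fin n → ℝ := hS.1.eigenvalues with ht
  set V : Matrix (Fin n) (Fin n) ℂ := (hG.1.eigenvectorUnitary : Matrix (Fin n) (Fin n) ℂ)
    with hVdef
  set W : Matrix (Fin n) (Fin n) ℂ := (hS.1.eigenvectorUnitary : Matrix (Fin n) (Fin n) ℂ)
    with hWdef
  have hVmem := hG.1.eigenvectorUnitary.2
  have hWmem := hS.1.eigenvectorUnitary.2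
  rw [Unitary.mem_iff] at hVmem hWmem
  have hV : Vᴴ * V = 1 := by rw [← Matrix.star_eq_conjTranspose]; exact hVmem.1
  have hVV : V * Vᴴ = 1 := by rw [← Matrix.star_eq_conjTranspose]; exact hVmem.2
  have hWW : W * Wᴴ = 1 := by rw [← Matrix.star_eq_conjTranspose]; exact hWmem.2
  have hSdiag : Wᴴ * (A^2 + B^2) * W = Matrix.diagonal (RCLike.ofReal ∘ t) := by
    rw [← Matrix.star_eq_conjTranspose]
    have := hS.1.conjStarAlgAut_star_eigenvectorUnitary
    rw [Unitary.conjStarAlgAut_star_apply] at this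
    exact this
  have hGspec : matAbs (A*B) = V * Matrix.diagonal (RCLike.ofReal ∘ s) * Vᴴ := by
    rw [← Matrix.star_eq_conjTranspose]
    have := hG.1.spectral_theorem
    rw [Unitary.conjStarAlgAut_apply] at this
    exact this
  set φ : Equiv.Perm (Fin n) := (Tuple.sort s).symm.trans (Tuple.sort t) with hφ
  have hkey : ∀ i, 2 * s i ≤ t (φ i) := by
    intro i
    have h := key_sorted hA hB hG hS ((Tuple.sort s).symm i)
    rw [Equiv.apply_symm_apply] at h
    exact h
  set W' : Matrix (Fin n) (Fin n) ℂ := W.submatrix id ⇑φ with hW'def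
  have hW'1 : W'ᴴ * W' = 1 := by
    have h := conj_perm 1 W φ
    rw [Matrix.mul_one] at h
    rw [hW'def, h, Matrix.mul_one]
    have h1 : Wᴴ * W = 1 := by rw [← Matrix.star_eq_conjTranspose]; exact hWmem.1
    rw [h1, one_perm]
  set U : Matrix (Fin n) (Fin n) ℂ := V * W'ᴴ with hUdef
  have hUH : Uᴴ = W' * Vᴴ := by
    rw [hUdef, Matrix.conjTranspose_mul, Matrix.conjTranspose_conjTranspose]
  have hUmem : U ∈ Matrix.unitaryGroup (Fin n) ℂ := by
    rw [Matrix.mem_unitaryGroup_iff, Matrix.star_eq_conjTranspose, hUH]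
    calc U * (W' * Vᴴ) = V * (W'ᴴ * W') * Vᴴ := by
          rw [hUdef]; noncomm_ring
      _ = 1 := by rw [hW'1, Matrix.mul_one, hVV]
  have hUSU : U * (A^2 + B^2) * Uᴴ
      = V * Matrix.diagonal (fun i => ((t (φ i) : ℝ) : ℂ)) * Vᴴ := by
    rw [hUH, hUdef]
    have h1 : V * W'ᴴ * (A^2+B^2) * (W' * Vᴴ) = V * (W'ᴴ * (A^2+B^2) * W') * Vᴴ := by
      noncomm_ring
    rw [h1]
    have h2 : W'ᴴ * (A^2+B^2) * W' = Matrix.diagonal (fun i => ((t (φ i) : ℝ) : ℂ)) := by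
      rw [hW'def, conj_perm, hSdiag, diag_perm]
      rfl
    rw [h2]
  refine ⟨U, hUmem, ?_⟩
  unfold loewnerLE
  have hdiff : (2 : ℂ)⁻¹ • (U * (A ^ 2 + B ^ 2) * Uᴴ) - matAbs (A*B)
      = V * Matrix.diagonal (fun i => (((2⁻¹ * t (φ i) - s i : ℝ)) : ℂ)) * Vᴴ := by
    rw [hUSU, hGspec]
    have h3 : (2 : ℂ)⁻¹ • (V * Matrix.diagonal (fun i => ((t (φ i) : ℝ) : ℂ)) * Vᴴ)
        = V * ((2 : ℂ)⁻¹ • Matrix.diagonal (fun i => ((t (φ i) : ℝ) : ℂ))) * Vᴴ := by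
      rw [mul_smul_comm, smul_mul_assoc]
    rw [h3, ← Matrix.sub_mul, ← Matrix.mul_sub]
    congr 1
    congr 1
    ext i k
    by_cases hik : i = k
    · subst hik
      simp only [Matrix.sub_apply, Matrix.smul_apply, Matrix.diagonal_apply_eq,
        Function.comp_apply, smul_eq_mul]
      push_cast
      try ring
      try rfl
    · simp [Matrix.sub_apply, Matrix.smul_apply, Matrix.diagonal_apply_ne _ hik]
  rw [hdiff]
  have hnn : 0 ≤ fun i => (((2⁻¹ * t (φ i) - s i : ℝ)) : ℂ) := by
    rw [Pi.le_def]
    intro i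
    simp only [Pi.zero_apply]
    rw [Complex.zero_le_real]
    have := hkey i
    linarith
  exact (Matrix.PosSemidef.diagonal hnn).mul_mul_conjTranspose_same V
end

section
/- Let A₁, ..., A_m be n×n positive definite complex matrices. Then tr(|A₁ ⋯ A_m|) ≤ tr((A₁^m + ⋯ + A_m^m)/m). -/
open Matrix
open scoped ComplexOrder Kronecker

namespace AMGM19

/-- Strictly-lower entries vanish: upper triangular. -/
def IsUT {d : ℕ} (T : Matrix (Fin d) (Fin d) ℂ) : Prop := ∀ i j : Fin d, j < i → T i j = 0

lemma IsUT.mul {d : ℕ} {S T : Matrix (Fin d) (Fin d) ℂ} (hS : IsUT S) (hT : IsUT T) :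
    IsUT (S * T) := by
  intro i j hji
  rw [Matrix.mul_apply]
  refine Finset.sum_eq_zero fun p _ => ?_
  rcases lt_or_ge p i with h | h
  · rw [hS i p h, zero_mul]
  · rw [hT p j (lt_of_lt_of_le hji h), mul_zero]

lemma IsUT.diag_mul {d : ℕ} {S T : Matrix (Fin d) (Fin d) ℂ} (hS : IsUT S) (hT : IsUT T)
    (i : Fin d) : (S * T) i i = S i i * T i i := by
  rw [Matrix.mul_apply]
  refine Finset.sum_eq_single i (fun p _ hp => ?_) (by simp)
  rcases lt_or_gt_of_ne hp with h | h
  · rw [hS i p h, zero_mul]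
  · rw [hT p i h, mul_zero]

lemma IsUT.one {d : ℕ} : IsUT (1 : Matrix (Fin d) (Fin d) ℂ) := by
  intro i j h
  exact Matrix.one_apply_ne (ne_of_gt h)

lemma IsUT.pow {d : ℕ} {T : Matrix (Fin d) (Fin d) ℂ} (hT : IsUT T) (k : ℕ) :
    IsUT (T ^ k) ∧ ∀ i, (T ^ k) i i = (T i i) ^ k := by
  induction k with
  | zero => exact ⟨by simpa [pow_zero] using IsUT.one, fun i => by simp⟩
  | succ k ih =>
    refine ⟨by rw [pow_succ]; exact ih.1.mul hT, fun i => ?_⟩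
    rw [pow_succ, ih.1.diag_mul hT, ih.2 i, pow_succ]


lemma exists_unit_eigenvector {d : ℕ} (Z : Matrix (Fin (d + 1)) (Fin (d + 1)) ℂ) :
    ∃ (μ : ℂ) (v : EuclideanSpace ℂ (Fin (d + 1))), ‖v‖ = 1 ∧ Z *ᵥ ⇑v = μ • ⇑v := by
  obtain ⟨μ, hμ⟩ := Module.End.exists_eigenvalue (Matrix.mulVecLin Z)
  obtain ⟨w, hw⟩ := hμ.exists_hasEigenvector
  have hw0 : w ≠ 0 := hw.right
  have hww : Z *ᵥ w = μ • w := hw.apply_eq_smul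
  set v0 : EuclideanSpace ℂ (Fin (d + 1)) := (WithLp.equiv 2 _).symm w with hv0
  have hv00 : v0 ≠ 0 := by
    simpa [hv0] using hw0
  refine ⟨μ, (‖v0‖⁻¹ : ℂ) • v0, ?_, ?_⟩
  · rw [norm_smul]
    simp [norm_inv, inv_mul_cancel₀ (norm_ne_zero_iff.mpr hv00)]
  · have hcoe : ⇑((‖v0‖⁻¹ : ℂ) • v0) = (‖v0‖⁻¹ : ℂ) • w := rfl
    rw [hcoe, Matrix.mulVec_smul, hww, smul_comm]


lemma exists_unitary_triangular : ∀ (d : ℕ) (Z : Matrix (Fin d) (Fin d) ℂ),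
    ∃ U : Matrix (Fin d) (Fin d) ℂ, Uᴴ * U = 1 ∧ IsUT (Uᴴ * Z * U) := by
  intro d
  induction d with
  | zero =>
    intro Z
    exact ⟨1, by simp, fun i j h => i.elim0⟩
  | succ d ih =>
    intro Z
    obtain ⟨μ, v, hv1, hvZ⟩ := exists_unit_eigenvector Z
    have hon : Orthonormal ℂ (Set.restrict {(0 : Fin (d + 1))} (fun _ : Fin (d + 1) => v)) := by
      rw [orthonormal_iff_ite]
      rintro ⟨i, hi⟩ ⟨j, hj⟩
      simp only [Set.mem_singleton_iff] at hi hj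
      subst hi; subst hj
      simp [Set.restrict, inner_self_eq_norm_sq_to_K, hv1]
    obtain ⟨b, hb⟩ := hon.exists_orthonormalBasis_extension_of_card_eq (by simp)
    have hb0 : b 0 = v := hb 0 rfl
    set U1 : Matrix (Fin (d + 1)) (Fin (d + 1)) ℂ := Matrix.of fun r i => b i r with hU1def
    have hinner : ∀ i j : Fin (d + 1), ∑ r, (starRingEnd ℂ) (b i r) * b j r
        = if i = j then 1 else 0 := by
      intro i j
      have h := orthonormal_iff_ite.mp b.orthonormal i j
      rw [PiLp.inner_apply] at h
      simpa only [RCLike.inner_apply'] using h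
    have hU1 : U1ᴴ * U1 = 1 := by
      ext i j
      rw [Matrix.mul_apply, Matrix.one_apply, ← hinner i j]
      refine Finset.sum_congr rfl fun r _ => ?_
      simp [hU1def, Matrix.conjTranspose_apply, RCLike.star_def]
    set M : Matrix (Fin (d + 1)) (Fin (d + 1)) ℂ := U1ᴴ * Z * U1 with hMdef
    have hMcol : ∀ r : Fin (d + 1), M r 0 = μ * (if r = 0 then 1 else 0) := by
      intro r
      have h1 : M r 0 = ∑ q, ∑ p, (starRingEnd ℂ) (b r p) * Z p q * v q := by
        rw [hMdef, Matrix.mul_apply]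
        refine Finset.sum_congr rfl fun q _ => ?_
        rw [Matrix.mul_apply, Finset.sum_mul]
        refine Finset.sum_congr rfl fun p _ => ?_
        simp [hU1def, Matrix.conjTranspose_apply, RCLike.star_def, hb0]
      have hvZ' : ∀ p, ∑ q, Z p q * v q = μ * v p := by
        intro p
        have h := congrFun hvZ p
        simpa [Matrix.mulVec, dotProduct] using h
      have hb0' : ∀ p : Fin (d + 1), v p = b 0 p := fun p => by rw [hb0]
      rw [h1, Finset.sum_comm]
      calc ∑ p, ∑ q, (starRingEnd ℂ) (b r p) * Z p q * v q
          = ∑ p, (starRingEnd ℂ) (b r p) * (μ * v p) := by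
            refine Finset.sum_congr rfl fun p _ => ?_
            simp only [mul_assoc]
            rw [← Finset.mul_sum, hvZ' p]
        _ = μ * ∑ p, (starRingEnd ℂ) (b r p) * (b 0 p) := by
            rw [Finset.mul_sum]
            refine Finset.sum_congr rfl fun p _ => ?_
            rw [← hb0' p]; ring
        _ = μ * (if r = 0 then 1 else 0) := by rw [hinner r 0]
    obtain ⟨W, hW, hWT⟩ := ih (M.submatrix Fin.succ Fin.succ)
    set V : Matrix (Fin (d + 1)) (Fin (d + 1)) ℂ :=
      Matrix.of (Fin.cases (Fin.cons 1 0) (fun i' => Fin.cons 0 (W i'))) with hVdef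
    have hV00 : V 0 0 = 1 := by simp [hVdef]
    have hV0s : ∀ j' : Fin d, V 0 j'.succ = 0 := by intro j'; simp [hVdef]
    have hVs0 : ∀ i' : Fin d, V i'.succ 0 = 0 := by intro i'; simp [hVdef]
    have hVss : ∀ i' j' : Fin d, V i'.succ j'.succ = W i' j' := by intro i' j'; simp [hVdef]
    have hVV : Vᴴ * V = 1 := by
      ext i j
      rw [Matrix.mul_apply, Fin.sum_univ_succ]
      rcases Fin.eq_zero_or_eq_succ i with rfl | ⟨i', rfl⟩ <;>
        rcases Fin.eq_zero_or_eq_succ j with rfl | ⟨j', rfl⟩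
      · simp [hV00, hVs0, Matrix.conjTranspose_apply]
      · simp [hV00, hV0s, hVs0, Matrix.conjTranspose_apply, Matrix.one_apply,
          (Fin.succ_ne_zero j').symm]
      · simp [hV00, hV0s, hVs0, Matrix.conjTranspose_apply, Matrix.one_apply, Fin.succ_ne_zero i']
      · have h := congrFun (congrFun hW i') j'
        rw [Matrix.mul_apply] at h
        calc (starRingEnd ℂ) (V 0 i'.succ) * V 0 j'.succ
              + ∑ p' : Fin d, Vᴴ i'.succ p'.succ * V p'.succ j'.succ
            = ∑ p' : Fin d, Wᴴ i' p' * W p' j' := by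
              rw [hV0s, hV0s]
              simp only [map_zero, zero_mul, mul_zero, zero_add]
              refine Finset.sum_congr rfl fun p' _ => ?_
              simp [Matrix.conjTranspose_apply, hVss]
          _ = (1 : Matrix (Fin d) (Fin d) ℂ) i' j' := h
          _ = (1 : Matrix (Fin (d + 1)) (Fin (d + 1)) ℂ) i'.succ j'.succ := by
              simp [Matrix.one_apply, Fin.succ_inj]
    have htriple : ∀ a c : Fin (d + 1),
        (Vᴴ * M * V) a c = ∑ q, (∑ p, (starRingEnd ℂ) (V p a) * M p q) * V q c := by
      intro a c
      rw [Matrix.mul_apply]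
      refine Finset.sum_congr rfl fun q _ => ?_
      rw [Matrix.mul_apply]
      simp [Matrix.conjTranspose_apply, RCLike.star_def]
    have hUT : IsUT (Vᴴ * M * V) := by
      intro i j hji
      rcases Fin.eq_zero_or_eq_succ i with rfl | ⟨i', rfl⟩
      · exact absurd hji (Fin.not_lt_zero j)
      rcases Fin.eq_zero_or_eq_succ j with rfl | ⟨j', rfl⟩
      · rw [htriple, Fin.sum_univ_succ]
        rw [Fin.sum_univ_succ]
        simp [hV00, hV0s, hVs0, hVss, hMcol, Fin.succ_ne_zero]
      · have h2 : (Vᴴ * M * V) i'.succ j'.succ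
            = (Wᴴ * (M.submatrix Fin.succ Fin.succ) * W) i' j' := by
          rw [htriple, Matrix.mul_apply, Fin.sum_univ_succ]
          rw [hV0s, mul_zero, zero_add]
          refine Finset.sum_congr rfl fun q' _ => ?_
          rw [hVss, Matrix.mul_apply]
          congr 1
          rw [Fin.sum_univ_succ, hV0s, map_zero, zero_mul, zero_add]
          refine Finset.sum_congr rfl fun p' _ => ?_
          simp [hVss, Matrix.conjTranspose_apply, RCLike.star_def, Matrix.submatrix_apply]
        rw [h2]
        exact hWT i' j' (by simpa [Fin.succ_lt_succ_iff] using hji)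
    refine ⟨U1 * V, ?_, ?_⟩
    · rw [Matrix.conjTranspose_mul]
      calc Vᴴ * U1ᴴ * (U1 * V) = Vᴴ * (U1ᴴ * U1) * V := by
            simp only [Matrix.mul_assoc]
        _ = 1 := by rw [hU1, Matrix.mul_one, hVV]
    · have hresc : (U1 * V)ᴴ * Z * (U1 * V) = Vᴴ * M * V := by
        rw [hMdef, Matrix.conjTranspose_mul]
        simp only [Matrix.mul_assoc]
      rw [hresc]
      exact hUT


lemma conj_pow {ι : Type*} [Fintype ι] [DecidableEq ι] (U T : Matrix ι ι ℂ)
    (hU : Uᴴ * U = 1) (k : ℕ) : (U * T * Uᴴ) ^ k = U * T ^ k * Uᴴ := by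
  have hU' : U * Uᴴ = 1 := mul_eq_one_comm.mp hU
  have cancel : ∀ X : Matrix ι ι ℂ, Uᴴ * (U * X) = X := fun X => by
    rw [← Matrix.mul_assoc, hU, Matrix.one_mul]
  induction k with
  | zero => simp [pow_zero, hU']
  | succ k ih =>
    rw [pow_succ, pow_succ, ih]
    simp only [Matrix.mul_assoc]
    rw [cancel]

lemma sum_diag_re_pow_le_trace {ι : Type*} [Fintype ι] [DecidableEq ι] {M : Matrix ι ι ℂ}
    (hM : M.PosSemidef) (k : ℕ) :
    ∑ i, (M i i).re ^ k ≤ ((M ^ k).trace).re := by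
  have hH := hM.isHermitian
  set V : Matrix ι ι ℂ := (hH.eigenvectorUnitary : Matrix ι ι ℂ) with hVdef
  have hVV : Vᴴ * V = 1 := by
    simpa [hVdef, Matrix.star_eq_conjTranspose] using
      (Matrix.mem_unitaryGroup_iff'.mp hH.eigenvectorUnitary.2)
  have hVV' : V * Vᴴ = 1 := mul_eq_one_comm.mp hVV
  set lam := hH.eigenvalues with hlam
  set D : Matrix ι ι ℂ := Matrix.diagonal (fun j => (lam j : ℂ)) with hDdef
  have hspec : M = V * D * Vᴴ := by
    have h := hH.spectral_theorem
    rw [Unitary.conjStarAlgAut_apply] at h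
    rw [hVdef, hDdef]
    exact h
  have hpow : M ^ k = V * D ^ k * Vᴴ := by rw [hspec, conj_pow _ _ hVV]
  have htr : ((M ^ k).trace).re = ∑ j, lam j ^ k := by
    rw [hpow, ← Matrix.trace_mul_cycle, Matrix.mul_assoc, hVV, Matrix.mul_one, hDdef,
      Matrix.diagonal_pow, Matrix.trace_diagonal]
    rw [Complex.re_sum]
    refine Finset.sum_congr rfl fun j _ => ?_
    simp [← Complex.ofReal_pow]
  have hdiag : ∀ i, (M i i).re = ∑ j, Complex.normSq (V i j) * lam j := by
    intro i
    rw [hspec, Matrix.mul_apply]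
    rw [Complex.re_sum]
    refine Finset.sum_congr rfl fun j _ => ?_
    rw [Matrix.mul_apply, Finset.sum_eq_single j (fun q _ hq => by
      simp [hDdef, Matrix.diagonal_apply_ne _ hq]) (by simp)]
    simp only [hDdef, Matrix.diagonal_apply_eq, Matrix.conjTranspose_apply, RCLike.star_def]
    have : V i j * (lam j : ℂ) * (starRingEnd ℂ) (V i j)
        = (lam j : ℂ) * (V i j * (starRingEnd ℂ) (V i j)) := by ring
    rw [this, Complex.mul_conj, ← Complex.ofReal_mul, Complex.ofReal_re, mul_comm]
  have hcol : ∀ j, ∑ i, Complex.normSq (V i j) = 1 := by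
    intro j
    have h := congrFun (congrFun hVV j) j
    rw [Matrix.mul_apply] at h
    have h2 : ∀ i, Vᴴ j i * V i j = (Complex.normSq (V i j) : ℂ) := by
      intro i
      rw [Matrix.conjTranspose_apply, RCLike.star_def, mul_comm, Complex.mul_conj]
    rw [Finset.sum_congr rfl fun i _ => h2 i] at h
    have h3 : ((∑ i, Complex.normSq (V i j) : ℝ) : ℂ) = 1 := by
      push_cast
      rw [h, Matrix.one_apply_eq]
    exact_mod_cast h3
  have hrow : ∀ i, ∑ j, Complex.normSq (V i j) = 1 := by
    intro i
    have h := congrFun (congrFun hVV' i) i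
    rw [Matrix.mul_apply] at h
    have h2 : ∀ j, V i j * Vᴴ j i = (Complex.normSq (V i j) : ℂ) := by
      intro j
      rw [Matrix.conjTranspose_apply, RCLike.star_def, Complex.mul_conj]
    rw [Finset.sum_congr rfl fun j _ => h2 j] at h
    have h3 : ((∑ j, Complex.normSq (V i j) : ℝ) : ℂ) = 1 := by
      push_cast
      rw [h, Matrix.one_apply_eq]
    exact_mod_cast h3
  have hlam0 : ∀ j, 0 ≤ lam j := hM.eigenvalues_nonneg
  calc ∑ i, (M i i).re ^ k
      = ∑ i, (∑ j, Complex.normSq (V i j) * lam j) ^ k := by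
        refine Finset.sum_congr rfl fun i _ => ?_
        rw [hdiag i]
    _ ≤ ∑ i, ∑ j, Complex.normSq (V i j) * lam j ^ k := by
        refine Finset.sum_le_sum fun i _ => ?_
        have hj := (convexOn_pow k).map_sum_le
          (t := Finset.univ) (w := fun j => Complex.normSq (V i j)) (p := lam)
          (fun j _ => Complex.normSq_nonneg _) (hrow i) (fun j _ => hlam0 j)
        simpa [smul_eq_mul] using hj
    _ = ∑ j, (∑ i, Complex.normSq (V i j)) * lam j ^ k := by
        rw [Finset.sum_comm]
        exact Finset.sum_congr rfl fun j _ => (Finset.sum_mul ..).symm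
    _ = ∑ j, lam j ^ k := by
        refine Finset.sum_congr rfl fun j _ => ?_
        rw [hcol j, one_mul]
    _ = ((M ^ k).trace).re := htr.symm


lemma re_trace_pow_le_fin {d : ℕ} (Z : Matrix (Fin d) (Fin d) ℂ) (k : ℕ) :
    ((Z ^ (2 * k)).trace).re ≤ (((Zᴴ * Z) ^ k).trace).re := by
  obtain ⟨U, hU, hT⟩ := exists_unitary_triangular d Z
  have hU' : U * Uᴴ = 1 := mul_eq_one_comm.mp hU
  set T := Uᴴ * Z * U with hTdef
  have hZ : Z = U * T * Uᴴ := by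
    rw [hTdef]
    calc Z = (U * Uᴴ) * Z * (U * Uᴴ) := by rw [hU', Matrix.one_mul, Matrix.mul_one]
      _ = U * (Uᴴ * Z * U) * Uᴴ := by simp only [Matrix.mul_assoc]
  have htr1 : (Z ^ (2 * k)).trace = (T ^ (2 * k)).trace := by
    rw [hZ, conj_pow _ _ hU, ← Matrix.trace_mul_cycle, Matrix.mul_assoc, hU, Matrix.mul_one]
  have cancel : ∀ X : Matrix (Fin d) (Fin d) ℂ, Uᴴ * (U * X) = X := fun X => by
    rw [← Matrix.mul_assoc, hU, Matrix.one_mul]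
  have hZZ : Zᴴ * Z = U * (Tᴴ * T) * Uᴴ := by
    rw [hZ]
    simp only [Matrix.conjTranspose_mul, Matrix.conjTranspose_conjTranspose, Matrix.mul_assoc]
    rw [cancel]
  have htr2 : ((Zᴴ * Z) ^ k).trace = ((Tᴴ * T) ^ k).trace := by
    rw [hZZ, conj_pow _ _ hU, ← Matrix.trace_mul_cycle, Matrix.mul_assoc, hU, Matrix.mul_one]
  rw [htr1, htr2]
  have hTpow := hT.pow (2 * k)
  have hdTT : ∀ i, Complex.normSq (T i i) ≤ ((Tᴴ * T) i i).re := by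
    intro i
    have h : ((Tᴴ * T) i i).re = ∑ j, Complex.normSq (T j i) := by
      rw [Matrix.mul_apply, Complex.re_sum]
      refine Finset.sum_congr rfl fun j _ => ?_
      rw [Matrix.conjTranspose_apply, RCLike.star_def, mul_comm, Complex.mul_conj,
        Complex.ofReal_re]
    rw [h]
    exact Finset.single_le_sum (f := fun j => Complex.normSq (T j i))
      (fun j _ => Complex.normSq_nonneg _) (Finset.mem_univ i)
  calc ((T ^ (2 * k)).trace).re
      = ∑ i, ((T i i) ^ (2 * k)).re := by
        rw [Matrix.trace, Complex.re_sum]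
        exact Finset.sum_congr rfl fun i _ => by rw [Matrix.diag_apply, hTpow.2 i]
    _ ≤ ∑ i, Complex.normSq (T i i) ^ k := by
        refine Finset.sum_le_sum fun i _ => ?_
        calc ((T i i) ^ (2 * k)).re ≤ ‖(T i i) ^ (2 * k)‖ := Complex.re_le_norm _
          _ = ‖T i i‖ ^ (2 * k) := by rw [norm_pow]
          _ = Complex.normSq (T i i) ^ k := by rw [pow_mul, Complex.sq_norm]
    _ ≤ ∑ i, ((Tᴴ * T) i i).re ^ k := by
        refine Finset.sum_le_sum fun i _ => ?_
        exact pow_le_pow_left₀ (Complex.normSq_nonneg _) (hdTT i) k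
    _ ≤ (((Tᴴ * T) ^ k).trace).re :=
        sum_diag_re_pow_le_trace (Matrix.posSemidef_conjTranspose_mul_self T) k


lemma re_trace_pow_le {ι : Type*} [Fintype ι] [DecidableEq ι] (Z : Matrix ι ι ℂ) (k : ℕ) :
    ((Z ^ (2 * k)).trace).re ≤ (((Zᴴ * Z) ^ k).trace).re := by
  classical
  let e := (Fintype.equivFin ι).symm
  have hsub : ∀ (p : ℕ) (Y : Matrix ι ι ℂ),
      (Y.submatrix e e) ^ p = (Y ^ p).submatrix e e := by
    intro p Y
    induction p with
    | zero => simp [pow_zero, Matrix.submatrix_one_equiv]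
    | succ p ih => rw [pow_succ, pow_succ, ih, Matrix.submatrix_mul_equiv]
  have htr : ∀ Y : Matrix ι ι ℂ, (Y.submatrix e e).trace = Y.trace := by
    intro Y
    rw [Matrix.trace, Matrix.trace]
    exact Equiv.sum_comp e (fun i => Y i i)
  have h := re_trace_pow_le_fin (Z.submatrix e e) k
  rw [hsub, htr] at h
  have hherm : (Z.submatrix e e)ᴴ * Z.submatrix e e = (Zᴴ * Z).submatrix e e := by
    rw [Matrix.conjTranspose_submatrix, Matrix.submatrix_mul_equiv]
  rwa [hherm, hsub, htr] at h

section cyclic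

variable {N n : ℕ} [NeZero N]

/-- Cyclic block matrix: block `(i, i + k)` equals `C i`. -/
def cyc (C : ZMod N → Matrix (Fin n) (Fin n) ℂ) (k : ZMod N) :
    Matrix (Fin n × ZMod N) (Fin n × ZMod N) ℂ :=
  fun p q => if q.2 = p.2 + k then C p.2 p.1 q.1 else 0

lemma cyc_mul (C D : ZMod N → Matrix (Fin n) (Fin n) ℂ) (k l : ZMod N) :
    cyc C k * cyc D l = cyc (fun i => C i * D (i + k)) (k + l) := by
  ext ⟨a, i⟩ ⟨b, j⟩
  have key : ∀ c : Fin n, ∀ t : ZMod N,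
      cyc C k (a, i) (c, t) * cyc D l (c, t) (b, j)
      = if t = i + k then C i a c * (if j = i + (k + l) then D (i + k) c b else 0) else 0 := by
    intro c t
    simp only [cyc]
    by_cases ht : t = i + k
    · subst ht
      simp [add_assoc]
    · simp [ht]
  rw [Matrix.mul_apply, Fintype.sum_prod_type]
  simp only [key]
  simp only [Finset.sum_ite_eq', Finset.mem_univ, if_true]
  simp only [cyc]
  by_cases hj : j = i + (k + l)
  · simp only [hj, if_pos rfl, Matrix.mul_apply, Finset.mul_sum]
    rfl
  · simp [hj]

/-- ordered partial products of the blocks along the cycle -/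
noncomputable def cprod (C : ZMod N → Matrix (Fin n) (Fin n) ℂ) :
    ℕ → ZMod N → Matrix (Fin n) (Fin n) ℂ
  | 0, _ => 1
  | (p + 1), i => cprod C p i * C (i + (p : ZMod N))

lemma cyc_one_zero (C : ZMod N → Matrix (Fin n) (Fin n) ℂ) (h : ∀ i, C i = 1) :
    cyc C 0 = 1 := by
  ext ⟨a, i⟩ ⟨b, j⟩
  simp only [cyc, add_zero, h, Matrix.one_apply, Prod.mk.injEq]
  by_cases hji : j = i
  · subst hji
    by_cases hab : a = b <;> simp [hab]
  · have hne : ¬(a = b ∧ i = j) := fun hc => hji hc.2.symm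
    simp [hji, hne]

lemma cyc_pow (C : ZMod N → Matrix (Fin n) (Fin n) ℂ) (p : ℕ) :
    (cyc C 1) ^ p = cyc (cprod C p) (p : ZMod N) := by
  induction p with
  | zero =>
    rw [pow_zero, Nat.cast_zero]
    exact (cyc_one_zero _ fun i => rfl).symm
  | succ p ih =>
    rw [pow_succ, ih, cyc_mul, Nat.cast_add, Nat.cast_one]
    rfl

lemma trace_cyc_zero (S : ZMod N → Matrix (Fin n) (Fin n) ℂ) :
    (cyc S 0).trace = ∑ i : ZMod N, (S i).trace := by
  rw [Matrix.trace, Fintype.sum_prod_type, Finset.sum_comm]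
  refine Finset.sum_congr rfl fun i _ => ?_
  rw [Matrix.trace]
  refine Finset.sum_congr rfl fun a _ => ?_
  simp [cyc, Matrix.diag_apply]

lemma cprod_add (C : ZMod N → Matrix (Fin n) (Fin n) ℂ) (p q : ℕ) (i : ZMod N) :
    cprod C (p + q) i = cprod C p i * cprod C q (i + (p : ZMod N)) := by
  induction q with
  | zero => simp [cprod]
  | succ q ih =>
    show cprod C ((p + q) + 1) i = _
    rw [show ((p+q)+1) = (p+q)+1 from rfl]
    calc cprod C (p + q) i * C (i + ((p + q : ℕ) : ZMod N))
        = cprod C p i * (cprod C q (i + (p : ZMod N)) * C ((i + (p : ZMod N)) + (q : ZMod N))) := by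
          rw [ih, Matrix.mul_assoc]
          congr 2
          push_cast
          ring
      _ = cprod C p i * cprod C (q + 1) (i + (p : ZMod N)) := rfl

lemma trace_cprod_univ (C : ZMod N → Matrix (Fin n) (Fin n) ℂ) (i : ZMod N) :
    (cprod C N i).trace = (cprod C N 0).trace := by
  set c : ℕ := i.val with hc
  have hcN : c ≤ N := le_of_lt (ZMod.val_lt i)
  have hci : ((c : ℕ) : ZMod N) = i := ZMod.natCast_rightInverse i
  have hNc : ((N - c : ℕ) : ZMod N) + (c : ZMod N) = 0 := by
    rw [← Nat.cast_add, Nat.sub_add_cancel hcN, ZMod.natCast_self]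
  have h0 : cprod C N 0 = cprod C c 0 * cprod C (N - c) ((c : ZMod N)) := by
    have h := cprod_add C c (N - c) 0
    rw [Nat.add_sub_cancel' hcN, zero_add] at h
    exact h
  have h1 : cprod C N i = cprod C (N - c) i * cprod C c 0 := by
    have h := cprod_add C (N - c) c i
    rw [Nat.sub_add_cancel hcN] at h
    have harg : i + ((N - c : ℕ) : ZMod N) = 0 := by
      rw [← hci, add_comm]
      exact hNc
    rw [h, harg]
  rw [h0, h1, Matrix.trace_mul_comm, hci]

lemma cyc_conjTranspose_mul_self (C : ZMod N → Matrix (Fin n) (Fin n) ℂ) :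
    (cyc C 1)ᴴ * (cyc C 1) = Matrix.blockDiagonal (fun i => (C (i - 1))ᴴ * C (i - 1)) := by
  ext ⟨a, i⟩ ⟨b, j⟩
  rw [Matrix.mul_apply, Fintype.sum_prod_type]
  have key : ∀ c : Fin n, ∀ t : ZMod N,
      (cyc C 1)ᴴ (a, i) (c, t) * cyc C 1 (c, t) (b, j)
      = if t = i - 1 then (starRingEnd ℂ) (C (i - 1) c a)
          * (if j = i then C (i - 1) c b else 0) else 0 := by
    intro c t
    simp only [Matrix.conjTranspose_apply, cyc, RCLike.star_def]
    by_cases ht : t = i - 1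
    · subst ht
      have h1 : i - 1 + 1 = i := by ring
      simp [h1]
    · have h1 : ¬ i = t + 1 := fun hc => ht (by rw [hc]; ring)
      rw [if_neg ht]
      simp [h1]
  simp only [key]
  simp only [Finset.sum_ite_eq', Finset.mem_univ, if_true]
  rw [Matrix.blockDiagonal_apply]
  by_cases hij : i = j
  · subst hij
    simp only [if_pos rfl, eq_self_iff_true, if_true]
    rw [Matrix.mul_apply]
    refine Finset.sum_congr rfl fun c _ => ?_
    rw [Matrix.conjTranspose_apply, RCLike.star_def]
  · have hji : ¬ j = i := fun hc => hij hc.symm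
    simp [hji, hij]

lemma sum_comp_fiber {m : ℕ} [NeZero (2 * m)] (f : ZMod (2 * m) → Fin m)
    (hf : ∀ (j : Fin m) (b : Fin 2), f (((2 * (j : ℕ) + (b : ℕ) : ℕ)) : ZMod (2 * m)) = j)
    (F : Fin m → ℂ) : ∑ i : ZMod (2 * m), F (f i) = 2 * ∑ j, F j := by
  have hcard : Fintype.card (Fin m × Fin 2) = Fintype.card (ZMod (2 * m)) := by
    simp [ZMod.card, mul_comm]
  set e : Fin m × Fin 2 → ZMod (2 * m) :=
    fun p => ((2 * (p.1 : ℕ) + (p.2 : ℕ) : ℕ) : ZMod (2 * m)) with he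
  have hlt : ∀ (j : Fin m) (b : Fin 2), 2 * (j : ℕ) + (b : ℕ) < 2 * m := by
    intro j b
    have := j.2
    have := b.2
    omega
  have hinj : Function.Injective e := by
    rintro ⟨j, b⟩ ⟨j', b'⟩ h
    have h2 := congrArg ZMod.val h
    rw [he] at h2
    simp only at h2
    rw [ZMod.val_cast_of_lt (hlt j b), ZMod.val_cast_of_lt (hlt j' b')] at h2
    have hj : (j : ℕ) = j' ∧ (b : ℕ) = b' := by
      have := b.2
      have := b'.2
      omega
    exact Prod.ext (Fin.ext hj.1) (Fin.ext hj.2)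
  have hbij : Function.Bijective e := (Fintype.bijective_iff_injective_and_card e).mpr ⟨hinj, hcard⟩
  rw [← Fintype.sum_bijective e hbij (fun p => F (f (e p))) (fun i => F (f i)) (fun p => rfl)]
  rw [Fintype.sum_prod_type]
  have hval : ∀ p : Fin m × Fin 2, f (e p) = p.1 := fun ⟨j, b⟩ => hf j b
  calc ∑ j : Fin m, ∑ b : Fin 2, F (f (e (j, b)))
      = ∑ j : Fin m, ∑ _b : Fin 2, F j := by
        refine Finset.sum_congr rfl fun j _ => Finset.sum_congr rfl fun b _ => ?_
        rw [hval (j, b)]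
    _ = 2 * ∑ j, F j := by
        rw [Finset.mul_sum]
        refine Finset.sum_congr rfl fun j _ => ?_
        rw [Finset.sum_const]
        simp [two_mul]

end cyclic

/-- explicit square root of a positive semidefinite matrix -/
noncomputable def psdSqrt {ι : Type*} [Fintype ι] [DecidableEq ι] {M : Matrix ι ι ℂ}
    (hM : M.PosSemidef) : Matrix ι ι ℂ :=
  hM.1.eigenvectorUnitary.1 * diagonal ((↑) ∘ (√·) ∘ hM.1.eigenvalues) *
    (star hM.1.eigenvectorUnitary : Matrix ι ι ℂ)

lemma psdSqrt_posSemidef {ι : Type*} [Fintype ι] [DecidableEq ι] {M : Matrix ι ι ℂ}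
    (hM : M.PosSemidef) : (psdSqrt hM).PosSemidef := by
  unfold psdSqrt
  rw [Matrix.star_eq_conjTranspose]
  refine PosSemidef.mul_mul_conjTranspose_same ?_ _
  rw [posSemidef_diagonal_iff]
  intro i
  exact Complex.zero_le_real.mpr (Real.sqrt_nonneg _)

lemma psdSqrt_mul_self {ι : Type*} [Fintype ι] [DecidableEq ι] {M : Matrix ι ι ℂ}
    (hM : M.PosSemidef) : psdSqrt hM * psdSqrt hM = M := by
  unfold psdSqrt
  have hu : (star hM.1.eigenvectorUnitary : Matrix ι ι ℂ) * hM.1.eigenvectorUnitary.1 = 1 :=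
    Unitary.coe_star_mul_self _
  set U := hM.1.eigenvectorUnitary.1 with hU
  set S := (star hM.1.eigenvectorUnitary : Matrix ι ι ℂ) with hS
  set D : Matrix ι ι ℂ := diagonal ((↑) ∘ (√·) ∘ hM.1.eigenvalues) with hD
  have hd : D * D = diagonal (RCLike.ofReal ∘ hM.1.eigenvalues) := by
    rw [hD, diagonal_mul_diagonal]
    congr 1
    funext i
    simp only [Function.comp_apply]
    (rw [← Complex.ofReal_mul, Real.mul_self_sqrt (hM.eigenvalues_nonneg i)]) <;> rfl
  rw [show U * D * S * (U * D * S) = U * (D * (S * U) * D) * S by simp only [Matrix.mul_assoc],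
    hu, Matrix.mul_one, hd]
  exact hM.1.spectral_theorem.symm

end AMGM19

open AMGM19

/-- For positive definite `A₁, …, A_m`,
`tr(|A₁ ⋯ A_m|) ≤ tr((A₁^m + ⋯ + A_m^m)/m)` (with the complex order on the traces). -/
theorem stmt19 {n m : ℕ} (hm : 0 < m) (A : Fin m → Matrix (Fin n) (Fin n) ℂ)
    (hA : ∀ i, (A i).PosDef) :
    (matAbs (List.ofFn A).prod).trace ≤ ((m : ℂ)⁻¹ • ∑ i, A i ^ m).trace := by

  classical
  haveI : NeZero (2 * m) := ⟨by omega⟩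
  set X : Matrix (Fin n) (Fin n) ℂ := (List.ofFn A).prod with hX
  set R : Matrix (Fin n) (Fin n) ℂ := matAbs X with hR
  have hRps : R.PosSemidef := psdSqrt_posSemidef (Matrix.posSemidef_conjTranspose_mul_self X)
  have hRH : Rᴴ = R := hRps.isHermitian
  have hRR : R * R = Xᴴ * X := psdSqrt_mul_self (Matrix.posSemidef_conjTranspose_mul_self X)
  have hXU : IsUnit X.det := by
    refine (Matrix.isUnit_iff_isUnit_det X).mp ?_
    refine List.prod_isUnit fun Y hY => ?_
    rcases (List.mem_ofFn).mp hY with ⟨i, rfl⟩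
    exact (hA i).isUnit
  have hRU : IsUnit R.det := by
    have h2 : R.det * R.det = Xᴴ.det * X.det := by
      rw [← Matrix.det_mul, hRR, Matrix.det_mul]
    have h3 : IsUnit (R.det * R.det) := by
      rw [h2]
      refine IsUnit.mul ?_ hXU
      rw [Matrix.det_conjTranspose]
      exact hXU.star
    exact isUnit_of_mul_isUnit_left h3
  set U : Matrix (Fin n) (Fin n) ℂ := X * R⁻¹ with hU
  have hUH : Uᴴ = R⁻¹ * Xᴴ := by
    rw [hU, Matrix.conjTranspose_mul, Matrix.conjTranspose_nonsing_inv, hRH]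
  have hUU : Uᴴ * U = 1 := by
    rw [hUH, hU]
    calc R⁻¹ * Xᴴ * (X * R⁻¹) = R⁻¹ * (Xᴴ * X) * R⁻¹ := by simp only [Matrix.mul_assoc]
      _ = R⁻¹ * (R * R) * R⁻¹ := by rw [hRR]
      _ = 1 := by
        rw [← Matrix.mul_assoc, Matrix.nonsing_inv_mul _ hRU,
          Matrix.one_mul, Matrix.mul_nonsing_inv _ hRU]
  have hUUc : U * Uᴴ = 1 := mul_eq_one_comm.mp hUU
  have hUX : Uᴴ * X = R := by
    rw [hUH, Matrix.mul_assoc, ← hRR, ← Matrix.mul_assoc, Matrix.nonsing_inv_mul _ hRU,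
      Matrix.one_mul]
  -- blocks
  set sq : Fin m → Matrix (Fin n) (Fin n) ℂ := fun i => psdSqrt (hA i).posSemidef with hsq
  have hsqmul : ∀ i, sq i * sq i = A i := fun i => psdSqrt_mul_self (hA i).posSemidef
  have hsqH : ∀ i, (sq i)ᴴ = sq i := fun i => (psdSqrt_posSemidef (hA i).posSemidef).isHermitian
  set f : ZMod (2 * m) → Fin m :=
    fun i => ⟨(ZMod.val i) / 2, by have h := ZMod.val_lt i; omega⟩ with hfdef
  set C : ZMod (2 * m) → Matrix (Fin n) (Fin n) ℂ :=
    fun i => (if i = 0 then Uᴴ else 1) * sq (f i) with hCdef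
  have hP : ∀ i : ZMod (2 * m),
      (if i = 0 then Uᴴ else (1 : Matrix (Fin n) (Fin n) ℂ))ᴴ
        * (if i = 0 then Uᴴ else 1) = 1 := by
    intro i
    split_ifs
    · rw [Matrix.conjTranspose_conjTranspose]
      exact hUUc
    · simp
  have hCC : ∀ i, (C i)ᴴ * C i = A (f i) := by
    intro i
    rw [hCdef]
    simp only [Matrix.conjTranspose_mul]
    calc (sq (f i))ᴴ * (if i = 0 then Uᴴ else 1)ᴴ * ((if i = 0 then Uᴴ else 1) * sq (f i))
        = (sq (f i))ᴴ * (((if i = 0 then Uᴴ else 1)ᴴ * (if i = 0 then Uᴴ else 1)) * sq (f i)) := by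
          simp only [Matrix.mul_assoc]
      _ = A (f i) := by rw [hP i, Matrix.one_mul, hsqH, hsqmul]
  set B := cyc C 1 with hB
  have hfval : ∀ c : ℕ, c < 2 * m → ((f ((c : ℕ) : ZMod (2 * m))) : ℕ) = c / 2 := by
    intro c hc
    simp only [hfdef]
    rw [ZMod.val_cast_of_lt hc]
  have hC0 : C 0 = Uᴴ * sq (f 0) := by rw [hCdef]; simp
  have hCne : ∀ c : ℕ, 0 < c → c < 2 * m →
      C ((c : ℕ) : ZMod (2 * m)) = sq (f ((c : ℕ) : ZMod (2 * m))) := by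
    intro c h0 hc
    rw [hCdef]
    simp only
    rw [if_neg, Matrix.one_mul]
    intro hzero
    have hv := ZMod.val_cast_of_lt hc
    rw [hzero, ZMod.val_zero] at hv
    omega
  have cprod_succ : ∀ (q : ℕ) (i : ZMod (2 * m)), cprod C (q + 1) i
      = cprod C q i * C (i + ((q : ℕ) : ZMod (2 * m))) := fun q i => rfl
  have htake : ∀ p (h : p < m),
      ((List.ofFn A).take (p + 1)).prod = ((List.ofFn A).take p).prod * A ⟨p, h⟩ := by
    intro p h
    rw [List.prod_take_succ _ p (by rw [List.length_ofFn]; exact h)]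
    congr 1
    simp [List.getElem_ofFn]
  have hclaim : ∀ p, p ≤ m → cprod C (2 * p) 0 =
      (if p = 0 then 1 else Uᴴ * ((List.ofFn A).take p).prod) := by
    intro p
    induction p with
    | zero => intro _; norm_num [cprod]
    | succ p ih =>
      intro hpm
      have hplt : p < m := hpm
      have e1 : 2 * (p + 1) = (2 * p + 1) + 1 := by ring
      have hstep : cprod C (2 * (p + 1)) 0
          = cprod C (2 * p) 0 * C (((2 * p : ℕ) : ZMod (2 * m)))
            * C (((2 * p + 1 : ℕ) : ZMod (2 * m))) := by
        rw [e1, cprod_succ, cprod_succ, zero_add, zero_add]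
      rcases Nat.eq_zero_or_pos p with rfl | hp0
      · have hf0 : f 0 = ⟨0, hm⟩ := Fin.ext (by simp [hfdef, ZMod.val_zero])
        have hf1 : f ((1 : ℕ) : ZMod (2 * m)) = ⟨0, hm⟩ :=
          Fin.ext (by rw [hfval 1 (by omega)])
        have hc2 : ((2 * 0 : ℕ) : ZMod (2 * m)) = 0 := by norm_num
        have hc21 : ((2 * 0 + 1 : ℕ) : ZMod (2 * m)) = ((1 : ℕ) : ZMod (2 * m)) := by norm_num
        have hcp0 : cprod C (2 * 0) 0 = 1 := by norm_num [cprod]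
        rw [hstep, hc2, hc21, hCne 1 (by omega) (by omega), hC0, hf0, hf1, hcp0,
          Matrix.one_mul, Matrix.mul_assoc, hsqmul]
        rw [if_neg (Nat.succ_ne_zero 0), htake 0 hm]
        simp
      · have hne : ¬ p = 0 := by omega
        have hd1 : (2 * p) / 2 = p := by omega
        have hd2 : (2 * p + 1) / 2 = p := by omega
        have hf2p : f (((2 * p : ℕ)) : ZMod (2 * m)) = ⟨p, hplt⟩ :=
          Fin.ext (by rw [hfval (2 * p) (by omega), hd1])
        have hf2p1 : f (((2 * p + 1 : ℕ)) : ZMod (2 * m)) = ⟨p, hplt⟩ :=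
          Fin.ext (by rw [hfval (2 * p + 1) (by omega), hd2])
        rw [hstep, ih (by omega), if_neg hne,
          hCne (2 * p) (by omega) (by omega), hCne (2 * p + 1) (by omega) (by omega),
          hf2p, hf2p1, if_neg (Nat.succ_ne_zero p)]
        calc Uᴴ * ((List.ofFn A).take p).prod * sq ⟨p, hplt⟩ * sq ⟨p, hplt⟩
            = Uᴴ * (((List.ofFn A).take p).prod * (sq ⟨p, hplt⟩ * sq ⟨p, hplt⟩)) := by
              simp only [Matrix.mul_assoc]
          _ = Uᴴ * ((List.ofFn A).take (p + 1)).prod := by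
              rw [hsqmul, ← htake p hplt]
  have hprod : cprod C (2 * m) 0 = Uᴴ * X := by
    have h := hclaim m le_rfl
    rw [if_neg (by omega)] at h
    rw [h, hX, List.take_of_length_le (le_of_eq List.length_ofFn)]
  have h_tr1 : (B ^ (2 * m)).trace = ((2 * m : ℕ) : ℂ) * R.trace := by
    rw [hB, cyc_pow, ZMod.natCast_self, trace_cyc_zero]
    calc ∑ i : ZMod (2 * m), (cprod C (2 * m) i).trace
        = ∑ _i : ZMod (2 * m), (cprod C (2 * m) 0).trace :=
          Finset.sum_congr rfl fun i _ => trace_cprod_univ C i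
      _ = ((2 * m : ℕ) : ℂ) * (cprod C (2 * m) 0).trace := by
          rw [Finset.sum_const, Finset.card_univ, ZMod.card, nsmul_eq_mul]
      _ = ((2 * m : ℕ) : ℂ) * R.trace := by rw [hprod, hUX]
  have h_tr2 : ((Bᴴ * B) ^ m).trace = 2 * ∑ i, (A i ^ m).trace := by
    rw [hB, cyc_conjTranspose_mul_self]
    have hfun : (fun i : ZMod (2 * m) => (C (i - 1))ᴴ * C (i - 1)) = fun i => A (f (i - 1)) :=
      funext fun i => hCC (i - 1)
    rw [hfun, ← Matrix.blockDiagonal_pow, Matrix.trace_blockDiagonal]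
    simp only [Pi.pow_apply]
    calc ∑ i : ZMod (2 * m), (A (f (i - 1)) ^ m).trace
        = ∑ i : ZMod (2 * m), (A (f i) ^ m).trace := by
          have := Equiv.sum_comp (Equiv.subRight (1 : ZMod (2 * m)))
            (fun i => (A (f i) ^ m).trace)
          simpa [Equiv.subRight_apply] using this
      _ = 2 * ∑ j, (A j ^ m).trace := by
          refine sum_comp_fiber (F := fun j => (A j ^ m).trace) f (fun j b => Fin.ext ?_)
          have hj := j.2
          have hb := b.2
          rw [hfval _ (by omega)]
          omega
  have hkey := re_trace_pow_le B m
  rw [h_tr1, h_tr2] at hkey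
  have him : ∀ (M : Matrix (Fin n) (Fin n) ℂ), Mᴴ = M → M.trace.im = 0 := by
    intro M hM
    have h := Matrix.trace_conjTranspose M
    rw [hM] at h
    exact Complex.conj_eq_iff_im.mp h.symm
  have hIm1 : R.trace.im = 0 := him R hRH
  have hImS : (∑ i, (A i ^ m).trace).im = 0 := by
    rw [Complex.im_sum]
    exact Finset.sum_eq_zero fun i _ => him _ (((hA i).posSemidef.pow m).isHermitian)
  set s : ℂ := ∑ i, (A i ^ m).trace with hs
  have hre : (2 * m : ℝ) * R.trace.re ≤ 2 * s.re := by
    have h1 : (((2 * m : ℕ) : ℂ) * R.trace).re = (2 * m : ℝ) * R.trace.re := by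
      simp [Complex.mul_re]
    have h2 : ((2 : ℂ) * s).re = 2 * s.re := by
      simp [Complex.mul_re]
    rw [h1, h2] at hkey
    exact hkey
  rw [Matrix.trace_smul, smul_eq_mul, Matrix.trace_sum, ← hs]
  rw [Complex.le_def]
  have hminv : ((m : ℂ))⁻¹ = (((m : ℝ)⁻¹ : ℝ) : ℂ) := by
    rw [Complex.ofReal_inv]
    norm_num
  constructor
  · rw [hminv]
    have h3 : ((((m : ℝ)⁻¹ : ℝ) : ℂ) * s).re = (m : ℝ)⁻¹ * s.re := by
      simp [Complex.mul_re]
    rw [h3]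
    rw [inv_mul_eq_div, le_div_iff₀ (by positivity : (0 : ℝ) < (m : ℝ))]
    push_cast at hre
    linarith
  · rw [hminv]
    simp [Complex.mul_im, hIm1, hImS]
end
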